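/- arXiv:2211.09138 — 5 statements merged into one kernel-verified Lean document; each statement's English description precedes it below -/
import Mathlib

section
/- Let V₊ be a generalized metric on (E, ⟨·,·⟩_E) and V₋ := V₊^⊥. Then for every generalized metric V'₊ on (E, ⟨·,·⟩_E) there exists a unique linear map φ₊ : V₊ → V₋ such that V'₊ is the graph of φ₊, i.e., V'₊ = { ψ + φ₊(ψ) : ψ ∈ V₊ }. -/
/-- A subspace on which the bilinear form is positive definite. -/
def IsPosDefOn {E : Type*} [AddCommGroup E] [Module ℝ E]
    (B : E →ₗ[ℝ] E →ₗ[ℝ] ℝ) (V : Submodule ℝ E) : Prop :=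
  ∀ x ∈ V, x ≠ 0 → 0 < B x x

/-- A generalized metric: a subspace on which the form is positive definite and which is
maximal with this property. -/
def IsGenMetric {E : Type*} [AddCommGroup E] [Module ℝ E]
    (B : E →ₗ[ℝ] E →ₗ[ℝ] ℝ) (V : Submodule ℝ E) : Prop :=
  IsPosDefOn B V ∧ ∀ W : Submodule ℝ E, V ≤ W → IsPosDefOn B W → W = V

/-- If `x` is `B`-orthogonal to a generalized metric `V` and `B x x > 0` whenever `x ≠ 0`,
then `x ∈ V` (by maximality). -/
lemma IsGenMetric.mem_of_orth {E : Type*} [AddCommGroup E] [Module ℝ E]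
    {B : E →ₗ[ℝ] E →ₗ[ℝ] ℝ} (hsymm : ∀ x y : E, B x y = B y x)
    {V : Submodule ℝ E} (hV : IsGenMetric B V) {x : E}
    (hx : ∀ v ∈ V, B v x = 0) (hpos : x ≠ 0 → 0 < B x x) : x ∈ V := by
  have hW : IsPosDefOn B (V ⊔ Submodule.span ℝ {x}) := by
    intro y hy hy0
    obtain ⟨v, hv, z, hz, rfl⟩ := Submodule.mem_sup.mp hy
    obtain ⟨t, rfl⟩ := Submodule.mem_span_singleton.mp hz
    have hvx : B v x = 0 := hx v hv
    have hxv : B x v = 0 := by rw [hsymm]; exact hvx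
    have hval : B (v + t • x) (v + t • x) = B v v + t * t * B x x := by
      simp [map_add, map_smul, hvx, hxv]
      ring
    rw [hval]
    rcases eq_or_ne v 0 with rfl | hv0
    · have ht : t • x ≠ 0 := by simpa using hy0
      have ht0 : t ≠ 0 := fun h => ht (by simp [h])
      have hx0 : x ≠ 0 := fun h => ht (by simp [h])
      have := hpos hx0
      have : 0 < t * t * B x x := mul_pos (mul_self_pos.mpr ht0) this
      simpa using this
    · have h1 : 0 < B v v := hV.1 v hv hv0
      have h2 : 0 ≤ t * t * B x x := by
        rcases eq_or_ne x 0 with rfl | hx0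
        · simp
        · exact mul_nonneg (mul_self_nonneg t) (hpos hx0).le
      linarith
  have := hV.2 _ le_sup_left hW
  rw [← this]
  exact Submodule.mem_sup_right (Submodule.mem_span_singleton_self x)

/-- Every generalized metric `V'₊` is the graph of a unique linear map
`φ₊ : V₊ → V₋`, where `V₋ = V₊^⊥`. -/
theorem genMetric_graph
    {E : Type*} [AddCommGroup E] [Module ℝ E] [FiniteDimensional ℝ E]
    (B : E →ₗ[ℝ] E →ₗ[ℝ] ℝ)
    (hsymm : ∀ x y : E, B x y = B y x)
    (hnondeg : ∀ x : E, (∀ y : E, B x y = 0) → x = 0)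
    (Vp : Submodule ℝ E) (hVp : IsGenMetric B Vp)
    (Vp' : Submodule ℝ E) (hVp' : IsGenMetric B Vp') :
    ∃! φ : Vp →ₗ[ℝ] (LinearMap.BilinForm.orthogonal B Vp),
      (Vp' : Set E) = { x : E | ∃ ψ : Vp, x = (ψ : E) + (φ ψ : E) } := by
  classical
  have hrefl : B.IsRefl := fun x y h => by rw [hsymm]; exact h
  set Vm := LinearMap.BilinForm.orthogonal B Vp with hVm
  set Vm' := LinearMap.BilinForm.orthogonal B Vp' with hVm'
  -- restricted forms are nondegenerate
  have hndR : ∀ (V : Submodule ℝ E), IsPosDefOn B V → (LinearMap.BilinForm.restrict B V).Nondegenerate := by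
    intro V hpd
    have key : ∀ m : V, LinearMap.BilinForm.restrict B V m m = 0 → m = 0 := by
      intro m hm
      by_contra h0
      have hx0 : (m : E) ≠ 0 := fun h => h0 (Subtype.ext h)
      have := hpd m m.2 hx0
      have := hm
      simp [LinearMap.BilinForm.restrict_apply] at this
      linarith
    exact ⟨fun m hm => key m (hm m), fun m hm => key m (hm m)⟩
  have hcompl : IsCompl Vp Vm :=
    LinearMap.BilinForm.isCompl_orthogonal_of_restrict_nondegenerate hrefl (hndR Vp hVp.1)
  have hcompl' : IsCompl Vp' Vm' :=
    LinearMap.BilinForm.isCompl_orthogonal_of_restrict_nondegenerate hrefl (hndR Vp' hVp'.1)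
  -- Vp' ⊓ Vm = ⊥
  have hinf1 : Vp' ⊓ Vm = ⊥ := by
    rw [eq_bot_iff]
    intro x hx
    obtain ⟨hx1, hx2⟩ := Submodule.mem_inf.mp hx
    have horth : ∀ v ∈ Vp, B v x = 0 := fun v hv =>
      (LinearMap.BilinForm.mem_orthogonal_iff.mp hx2) v hv
    have hxVp : x ∈ Vp :=
      hVp.mem_of_orth hsymm horth (fun hx0 => hVp'.1 x hx1 hx0)
    have : B x x = 0 := horth x hxVp
    by_contra h
    have hx0 : x ≠ 0 := by simpa using h
    have := hVp'.1 x hx1 hx0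
    linarith
  have hinf2 : Vp ⊓ Vm' = ⊥ := by
    rw [eq_bot_iff]
    intro x hx
    obtain ⟨hx1, hx2⟩ := Submodule.mem_inf.mp hx
    have horth : ∀ v ∈ Vp', B v x = 0 := fun v hv =>
      (LinearMap.BilinForm.mem_orthogonal_iff.mp hx2) v hv
    have hxVp' : x ∈ Vp' :=
      hVp'.mem_of_orth hsymm horth (fun hx0 => hVp.1 x hx1 hx0)
    have : B x x = 0 := horth x hxVp'
    by_contra h
    have hx0 : x ≠ 0 := by simpa using h
    have := hVp.1 x hx1 hx0
    linarith
  -- projections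
  set q : Vp' →ₗ[ℝ] Vp :=
    (Submodule.projectionOnto Vp Vm hcompl).comp Vp'.subtype with hq
  set q' : Vp →ₗ[ℝ] Vp' :=
    (Submodule.projectionOnto Vp' Vm' hcompl').comp Vp.subtype with hq'
  have hqinj : Function.Injective q := by
    rw [← LinearMap.ker_eq_bot, eq_bot_iff]
    intro x hx
    have : (x : E) ∈ Vm := by
      have := LinearMap.mem_ker.mp hx
      simpa [hq, Submodule.projectionOnto_apply_eq_zero_iff] using this
    have : (x : E) ∈ Vp' ⊓ Vm := Submodule.mem_inf.mpr ⟨x.2, this⟩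
    rw [hinf1] at this
    simpa using Subtype.ext (by simpa using this : (x : E) = 0)
  have hq'inj : Function.Injective q' := by
    rw [← LinearMap.ker_eq_bot, eq_bot_iff]
    intro x hx
    have : (x : E) ∈ Vm' := by
      have := LinearMap.mem_ker.mp hx
      simpa [hq', Submodule.projectionOnto_apply_eq_zero_iff] using this
    have : (x : E) ∈ Vp ⊓ Vm' := Submodule.mem_inf.mpr ⟨x.2, this⟩
    rw [hinf2] at this
    simpa using Subtype.ext (by simpa using this : (x : E) = 0)
  have hrank : Module.finrank ℝ Vp' = Module.finrank ℝ Vp :=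
    le_antisymm (LinearMap.finrank_le_finrank_of_injective hqinj)
      (LinearMap.finrank_le_finrank_of_injective hq'inj)
  let e : Vp' ≃ₗ[ℝ] Vp := q.linearEquivOfInjective hqinj hrank
  have he : ∀ x : Vp', e x = q x := fun x =>
    LinearMap.linearEquivOfInjective_apply hqinj hrank x
  let pm : E →ₗ[ℝ] Vm := Submodule.projectionOnto Vm Vp hcompl.symm
  let φ : Vp →ₗ[ℝ] Vm := (pm.comp Vp'.subtype).comp e.symm.toLinearMap
  have hsum : ∀ x : Vp', (q x : E) + (pm (x : E) : E) = (x : E) := by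
    intro x
    have := Submodule.projection_add_projection_eq_self hcompl (x : E)
    simpa [hq, pm] using this
  have hgraph : (Vp' : Set E) = { x : E | ∃ ψ : Vp, x = (ψ : E) + (φ ψ : E) } := by
    ext x
    constructor
    · intro hx
      refine ⟨q ⟨x, hx⟩, ?_⟩
      have hsymm' : e.symm (q ⟨x, hx⟩) = ⟨x, hx⟩ := by
        rw [← he]; exact e.symm_apply_apply _
      have : (φ (q ⟨x, hx⟩) : E) = (pm x : E) := by
        simp only [φ, LinearMap.comp_apply, LinearEquiv.coe_coe, hsymm']
        rfl
      rw [this]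
      exact (hsum ⟨x, hx⟩).symm
    · rintro ⟨ψ, rfl⟩
      set y : Vp' := e.symm ψ with hy
      have heq : q y = ψ := by rw [← he, hy, e.apply_symm_apply]
      have : (φ ψ : E) = (pm (y : E) : E) := rfl
      rw [this, ← heq]
      rw [show (q y : E) + (pm (y : E) : E) = (y : E) from hsum y]
      exact y.2
  refine ⟨φ, hgraph, ?_⟩
  intro φ' hφ'
  ext ψ
  have hmem : ((ψ : E) + (φ' ψ : E)) ∈ (Vp' : Set E) := by
    rw [hφ']; exact ⟨ψ, rfl⟩
  rw [hgraph] at hmem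
  obtain ⟨ψ₂, hψ₂⟩ := hmem
  have hdiff : ((ψ : E) - (ψ₂ : E)) = ((φ ψ₂ : E) - (φ' ψ : E)) := by
    rw [sub_eq_sub_iff_add_eq_add, hψ₂, add_comm]
  have h1 : ((ψ : E) - (ψ₂ : E)) ∈ Vp := sub_mem ψ.2 ψ₂.2
  have h2 : ((ψ : E) - (ψ₂ : E)) ∈ Vm := by
    rw [hdiff]; exact sub_mem (φ ψ₂).2 (φ' ψ).2
  have h0 : ((ψ : E) - (ψ₂ : E)) = 0 := by
    have : ((ψ : E) - (ψ₂ : E)) ∈ Vp ⊓ Vm := Submodule.mem_inf.mpr ⟨h1, h2⟩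
    rw [hcompl.inf_eq_bot] at this
    simpa using this
  have hψeq : ψ = ψ₂ := Subtype.ext (sub_eq_zero.mp h0)
  have hφeq : (φ' ψ : E) = (φ ψ₂ : E) := by
    have := hψ₂
    rw [show (ψ₂ : E) = (ψ : E) from (congrArg _ hψeq.symm)] at this
    exact (add_left_cancel this).symm ▸ rfl
  rw [show φ ψ = φ ψ₂ from congrArg φ hψeq]
  exact hφeq
end

section
/- Let V₊ be a generalized metric on (E, ⟨·,·⟩_E), V₋ := V₊^⊥, and let φ₊ : V₊ → V₋ be an arbitrary linear map. Then there exists ε₀ > 0 such that for every ε ∈ ℝ with |ε| < ε₀, the graph { ψ + ε·φ₊(ψ) : ψ ∈ V₊ } is again a generalized metric on (E, ⟨·,·⟩_E). -/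
open LinearMap

/-- Boundedness of a linear map between spaces with positive definite symmetric forms. -/
lemma bound_aux {F G : Type*} [AddCommGroup F] [Module ℝ F] [FiniteDimensional ℝ F]
    [AddCommGroup G] [Module ℝ G]
    (Bf : F →ₗ[ℝ] F →ₗ[ℝ] ℝ) (Bg : G →ₗ[ℝ] G →ₗ[ℝ] ℝ)
    (hfs : ∀ x y, Bf x y = Bf y x) (hgs : ∀ x y, Bg x y = Bg y x)
    (hf : ∀ x : F, x ≠ 0 → 0 < Bf x x) (hg : ∀ x : G, x ≠ 0 → 0 < Bg x x)
    (φ : F →ₗ[ℝ] G) :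
    ∃ C > 0, ∀ x : F, Bg (φ x) (φ x) ≤ C * Bf x x := by
  have hf0 : ∀ x : F, 0 ≤ Bf x x := by
    intro x
    by_cases h : x = 0
    · simp [h]
    · exact (hf x h).le
  have hg0 : ∀ x : G, 0 ≤ Bg x x := by
    intro x
    by_cases h : x = 0
    · simp [h]
    · exact (hg x h).le
  letI cF : InnerProductSpace.Core ℝ F :=
  { inner := fun x y => Bf x y
    conj_inner_symm := fun x y => hfs y x
    re_inner_nonneg := fun x => hf0 x
    add_left := fun x y z => by simp
    smul_left := fun x y r => by simp
    definite := fun x h => by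
      by_contra hx
      exact (hf x hx).ne' h }
  letI cG : InnerProductSpace.Core ℝ G :=
  { inner := fun x y => Bg x y
    conj_inner_symm := fun x y => hgs y x
    re_inner_nonneg := fun x => hg0 x
    add_left := fun x y z => by simp
    smul_left := fun x y r => by simp
    definite := fun x h => by
      by_contra hx
      exact (hg x hx).ne' h }
  letI : NormedAddCommGroup F := cF.toNormedAddCommGroup
  letI : InnerProductSpace ℝ F := InnerProductSpace.ofCore cF.toCore
  letI : NormedAddCommGroup G := cG.toNormedAddCommGroup
  letI : InnerProductSpace ℝ G := InnerProductSpace.ofCore cG.toCore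
  let φ' : F →L[ℝ] G := LinearMap.toContinuousLinearMap φ
  refine ⟨‖φ'‖ ^ 2 + 1, by positivity, fun x => ?_⟩
  have e1 : (inner ℝ (φ x) (φ x) : ℝ) = Bg (φ x) (φ x) := rfl
  have e2 : (inner ℝ x x : ℝ) = Bf x x := rfl
  have h1 : Bg (φ x) (φ x) = ‖φ x‖ ^ 2 := by rw [← e1]; exact real_inner_self_eq_norm_sq _
  have h2 : Bf x x = ‖x‖ ^ 2 := by rw [← e2]; exact real_inner_self_eq_norm_sq _
  have h3 : ‖φ x‖ ≤ ‖φ'‖ * ‖x‖ := φ'.le_opNorm x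
  calc Bg (φ x) (φ x) = ‖φ x‖ ^ 2 := h1
    _ ≤ (‖φ'‖ * ‖x‖) ^ 2 := by
        apply pow_le_pow_left₀ (norm_nonneg _) h3
    _ = ‖φ'‖ ^ 2 * ‖x‖ ^ 2 := by ring
    _ ≤ (‖φ'‖ ^ 2 + 1) * ‖x‖ ^ 2 := by nlinarith [sq_nonneg ‖x‖]
    _ = (‖φ'‖ ^ 2 + 1) * Bf x x := by rw [h2]
theorem genMetric_graph_perturbation'
    {E : Type*} [AddCommGroup E] [Module ℝ E] [FiniteDimensional ℝ E]
    (B : E →ₗ[ℝ] E →ₗ[ℝ] ℝ)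
    (hsymm : ∀ x y : E, B x y = B y x)
    (hnondeg : ∀ x : E, (∀ y : E, B x y = 0) → x = 0)
    (Vp Vm : Submodule ℝ E) (hVmdef : Vm = LinearMap.BilinForm.orthogonal B Vp)
    (hVp : (∀ x ∈ Vp, x ≠ 0 → 0 < B x x) ∧
      ∀ W : Submodule ℝ E, Vp ≤ W → (∀ x ∈ W, x ≠ 0 → 0 < B x x) → W = Vp)
    (φ : Vp →ₗ[ℝ] Vm) :
    ∃ ε₀ > (0 : ℝ), ∀ ε : ℝ, |ε| < ε₀ →
      (∀ x ∈ LinearMap.range (Vp.subtype + ε • (Vm.subtype ∘ₗ φ)), x ≠ 0 → 0 < B x x) ∧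
      ∀ W : Submodule ℝ E, LinearMap.range (Vp.subtype + ε • (Vm.subtype ∘ₗ φ)) ≤ W →
        (∀ x ∈ W, x ≠ 0 → 0 < B x x) →
        W = LinearMap.range (Vp.subtype + ε • (Vm.subtype ∘ₗ φ)) := by
  have hrefl : B.IsRefl := fun x y h => by rw [hsymm]; exact h
  have horth : ∀ ψ ∈ Vp, ∀ x ∈ Vm, B ψ x = 0 := by
    subst hVmdef; exact fun ψ hψ x hx => hx ψ hψ
  -- nondegeneracy of the restriction to Vp
  have hVpnd : (LinearMap.BilinForm.restrict B Vp).Nondegenerate := by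
    refine (LinearMap.IsRefl.nondegenerate_iff_separatingLeft (fun x y h => by
      show B (y : E) (x : E) = 0; rw [hsymm]; exact h)).2 ?_
    intro x h
    by_contra hx
    have hx' : (x : E) ≠ 0 := fun h0 => hx (Subtype.ext h0)
    have h1 := hVp.1 x x.2 hx'
    have h0 : B (x : E) (x : E) = 0 := h x
    linarith
  have hcompl : IsCompl Vp Vm := by
    rw [hVmdef]
    exact LinearMap.BilinForm.isCompl_orthogonal_of_restrict_nondegenerate hrefl hVpnd
  -- B is negative semidefinite on Vm
  have hnpos : ∀ x ∈ Vm, B x x ≤ 0 := by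
    intro x hx
    by_contra h
    push_neg at h
    have hx0 : x ≠ 0 := by rintro rfl; simp at h
    have hWpd : ∀ z ∈ Vp ⊔ (ℝ ∙ x), z ≠ 0 → 0 < B z z := by
      intro z hz hz0
      obtain ⟨ψ, hψ, w, hw, rfl⟩ := Submodule.mem_sup.1 hz
      obtain ⟨t, rfl⟩ := Submodule.mem_span_singleton.1 hw
      have c1 : B ψ x = 0 := horth ψ hψ x hx
      have c2 : B x ψ = 0 := by rw [hsymm]; exact c1
      have expand : B (ψ + t • x) (ψ + t • x) = B ψ ψ + t ^ 2 * B x x := by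
        simp only [map_add, map_smul, LinearMap.add_apply, LinearMap.smul_apply,
          smul_eq_mul, c1, c2]
        ring
      rw [expand]
      by_cases hψ0 : ψ = 0
      · subst hψ0
        have ht : t ≠ 0 := by rintro rfl; simp at hz0
        have : 0 < t ^ 2 * B x x := by positivity
        simpa using this
      · have h1 : 0 < B ψ ψ := hVp.1 ψ hψ hψ0
        nlinarith [sq_nonneg t, h.le]
    have hEq := hVp.2 (Vp ⊔ (ℝ ∙ x)) le_sup_left hWpd
    have hxVp : x ∈ Vp := by
      rw [← hEq]
      exact Submodule.mem_sup_right (Submodule.mem_span_singleton_self x)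
    have hx00 : B x x = 0 := by
      rw [hVmdef] at hx
      exact hx x hxVp
    linarith
  -- B is negative definite on Vm
  have hneg : ∀ x ∈ Vm, x ≠ 0 → B x x < 0 := by
    intro x hx hx0
    rcases lt_or_eq_of_le (hnpos x hx) with hlt | h
    · exact hlt
    exfalso
    apply hx0
    apply hnondeg
    have hym : ∀ y ∈ Vm, B x y = 0 := by
      intro y hy
      by_contra ha
      have key : ∀ s : ℝ, 2 * s * B x y + B y y ≤ 0 := by
        intro s
        have hmem : s • x + y ∈ Vm := Vm.add_mem (Vm.smul_mem s hx) hy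
        have hle := hnpos _ hmem
        have hyx : B y x = B x y := hsymm y x
        have expand : B (s • x + y) (s • x + y) = 2 * s * B x y + B y y := by
          simp only [map_add, map_smul, LinearMap.add_apply, LinearMap.smul_apply,
            smul_eq_mul]
          rw [hyx, h]
          ring
        linarith [expand ▸ hle]
      have h2 := key ((1 - B y y) / (2 * B x y))
      have h3 : 2 * ((1 - B y y) / (2 * B x y)) * B x y = 1 - B y y := by
        field_simp
      rw [h3] at h2
      linarith
    have hyp : ∀ y ∈ Vp, B x y = 0 := by
      intro y hy
      rw [hsymm]
      exact horth y hy x hx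
    intro y
    have hmem : y ∈ Vp ⊔ Vm := by rw [hcompl.sup_eq_top]; trivial
    obtain ⟨p, hp, q, hq, rfl⟩ := Submodule.mem_sup.1 hmem
    rw [map_add, hyp p hp, hym q hq, add_zero]
  -- the bound
  obtain ⟨C, hC, hbound⟩ := bound_aux (LinearMap.BilinForm.restrict B Vp)
    (-(LinearMap.BilinForm.restrict B Vm))
    (fun x y => hsymm (x : E) (y : E))
    (fun x y => by
      show -(B (x : E) (y : E)) = -(B (y : E) (x : E))
      rw [hsymm (x : E) (y : E)])
    (fun x hx => hVp.1 x x.2 (fun h0 => hx (Subtype.ext h0)))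
    (fun x hx => by
      have := hneg x x.2 (fun h0 => hx (Subtype.ext h0))
      show 0 < -(B (x : E) (x : E))
      linarith)
    φ
  refine ⟨min 1 C⁻¹, lt_min one_pos (by positivity), fun ε hε => ?_⟩
  have hkey : ε ^ 2 * C < 1 := by
    rcases eq_or_ne ε 0 with rfl | hε0
    · simpa using zero_lt_one
    · have h1 : |ε| < 1 := lt_of_lt_of_le hε (min_le_left _ _)
      have h2 : |ε| < C⁻¹ := lt_of_lt_of_le hε (min_le_right _ _)
      have h3 : |ε| * C < 1 := by
        rw [← inv_mul_cancel₀ (ne_of_gt hC)]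
        exact mul_lt_mul_of_pos_right h2 hC
      have h4 : 0 < |ε| := abs_pos.2 hε0
      calc ε ^ 2 * C = |ε| * (|ε| * C) := by rw [← sq_abs ε]; ring
        _ < 1 * 1 := mul_lt_mul' h1.le h3 (by positivity) zero_lt_one
        _ = 1 := mul_one 1
  set f := Vp.subtype + ε • (Vm.subtype ∘ₗ φ) with hf
  have hf_apply : ∀ ψ : Vp, f ψ = (ψ : E) + ε • ((φ ψ : E)) := fun ψ => rfl
  have quad : ∀ ψ : Vp, B (f ψ) (f ψ) = B ψ ψ + ε ^ 2 * B (φ ψ : E) (φ ψ : E) := by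
    intro ψ
    have c1 : B ψ (φ ψ : E) = 0 := horth ψ ψ.2 (φ ψ : E) (φ ψ).2
    have c2 : B (φ ψ : E) ψ = 0 := by rw [hsymm]; exact c1
    rw [hf_apply]
    simp only [map_add, map_smul, LinearMap.add_apply, LinearMap.smul_apply,
      smul_eq_mul, c1, c2]
    ring
  have hquadbound : ∀ ψ : Vp, -B (φ ψ : E) (φ ψ : E) ≤ C * B ψ ψ := fun ψ => hbound ψ
  have hpos : ∀ x ∈ LinearMap.range f, x ≠ 0 → 0 < B x x := by
    rintro x ⟨ψ, rfl⟩ hx0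
    have hψ0 : ψ ≠ 0 := by rintro rfl; simp at hx0
    have hψ0' : (ψ : E) ≠ 0 := fun h0 => hψ0 (Subtype.ext h0)
    have h1 : 0 < B ψ ψ := hVp.1 ψ ψ.2 hψ0'
    have h2 := hquadbound ψ
    rw [quad ψ]
    nlinarith [sq_nonneg ε, mul_le_mul_of_nonneg_left h2 (sq_nonneg ε), hkey, h1]
  refine ⟨hpos, ?_⟩
  have finj : Function.Injective f := by
    rw [← LinearMap.ker_eq_bot, eq_bot_iff]
    intro ψ hψ
    simp only [LinearMap.mem_ker] at hψ
    rw [hf_apply] at hψ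
    have hmem : (ψ : E) ∈ Vp ⊓ Vm := by
      constructor
      · exact ψ.2
      · have heq : (ψ : E) = -(ε • (φ ψ : E)) := by
          rw [eq_neg_iff_add_eq_zero]; exact hψ
        rw [heq]
        exact Vm.neg_mem (Vm.smul_mem ε (φ ψ).2)
    rw [hcompl.inf_eq_bot, Submodule.mem_bot] at hmem
    rw [Submodule.mem_bot]
    exact Subtype.ext hmem
  have frank : Module.finrank ℝ (LinearMap.range f) = Module.finrank ℝ Vp :=
    LinearMap.finrank_range_of_inj finj
  intro W hle hW
  have hWVm : W ⊓ Vm = ⊥ := by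
    rw [eq_bot_iff]
    intro x hx
    rcases eq_or_ne x 0 with rfl | hx0
    · exact Submodule.zero_mem _
    · exfalso
      have h1 := hW x hx.1 hx0
      have h2 := hneg x hx.2 hx0
      linarith
  have hsum : Module.finrank ℝ W + Module.finrank ℝ Vm ≤ Module.finrank ℝ E := by
    have h1 := Submodule.finrank_sup_add_finrank_inf_eq W Vm
    rw [hWVm, finrank_bot, add_zero] at h1
    rw [← h1]
    exact Submodule.finrank_le _
  have hEsum : Module.finrank ℝ Vp + Module.finrank ℝ Vm = Module.finrank ℝ E :=
    Submodule.finrank_add_eq_of_isCompl hcompl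
  have hWle : Module.finrank ℝ W ≤ Module.finrank ℝ (LinearMap.range f) := by
    rw [frank]; omega
  exact (Submodule.eq_of_le_of_finrank_le hle hWle).symm


/-- For a generalized metric `V₊` and any linear map `φ₊ : V₊ → V₋`,
there is `ε₀ > 0` such that for all `|ε| < ε₀` the graph `{ψ + ε·φ₊(ψ) : ψ ∈ V₊}`
is again a generalized metric. -/
theorem genMetric_graph_perturbation
    {E : Type*} [AddCommGroup E] [Module ℝ E] [FiniteDimensional ℝ E]
    (B : E →ₗ[ℝ] E →ₗ[ℝ] ℝ)
    (hsymm : ∀ x y : E, B x y = B y x)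
    (hnondeg : ∀ x : E, (∀ y : E, B x y = 0) → x = 0)
    (Vp : Submodule ℝ E) (hVp : IsGenMetric B Vp)
    (φ : Vp →ₗ[ℝ] (LinearMap.BilinForm.orthogonal B Vp)) :
    ∃ ε₀ > (0 : ℝ), ∀ ε : ℝ, |ε| < ε₀ →
      IsGenMetric B (LinearMap.range
        (Vp.subtype + ε • ((LinearMap.BilinForm.orthogonal B Vp).subtype ∘ₗ φ))) := by
  obtain ⟨ε₀, hε₀, h⟩ := genMetric_graph_perturbation' B hsymm hnondeg Vp
    (LinearMap.BilinForm.orthogonal B Vp) rfl hVp φ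
  exact ⟨ε₀, hε₀, fun ε hε => h ε hε⟩
end

section
/- A subspace V₊ ⊆ E = V ⊕ V* is a generalized metric if and only if there exist a positive-definite symmetric bilinear form g on V and an antisymmetric bilinear form B on V such that V₊ = { (X, g(X,·) + B(X,·)) : X ∈ V }. Moreover, the pair (g, B) is uniquely determined by V₊, and the orthogonal complement is then V₋ = V₊^⊥ = { (X, −g(X,·) + B(X,·)) : X ∈ V }. -/
/-- The canonical symmetric pairing `⟨(X,ξ),(Y,η)⟩ = η(X) + ξ(Y)` on `V ⊕ V*`. -/
def canonPairing (V : Type*) [AddCommGroup V] [Module ℝ V] :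
    (V × Module.Dual ℝ V) →ₗ[ℝ] (V × Module.Dual ℝ V) →ₗ[ℝ] ℝ :=
  LinearMap.mk₂ ℝ (fun p q => q.2 p.1 + p.2 q.1)
    (by intro p p' q; simp; ring)
    (by intro c p q; simp; ring)
    (by intro p q q'; simp; ring)
    (by intro c p q; simp; ring)

set_option maxHeartbeats 1000000
set_option linter.unusedSectionVars false

section helpers

variable {V : Type*} [AddCommGroup V] [Module ℝ V]

lemma canon_apply (p q : V × Module.Dual ℝ V) :
    canonPairing V p q = q.2 p.1 + p.2 q.1 := rfl

lemma canon_self (p : V × Module.Dual ℝ V) :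
    canonPairing V p p = 2 * p.2 p.1 := by rw [canon_apply]; ring

lemma graph_isGenMetric (Vp : Submodule ℝ (V × Module.Dual ℝ V))
    (g Bf : V →ₗ[ℝ] V →ₗ[ℝ] ℝ)
    (hpos : ∀ X : V, X ≠ 0 → 0 < g X X)
    (hB : ∀ X Y : V, Bf X Y = - Bf Y X)
    (hVp : (Vp : Set (V × Module.Dual ℝ V)) = { p | ∃ X : V, p = (X, g X + Bf X) }) :
    IsGenMetric (canonPairing V) Vp := by
  have hmem : ∀ p : V × Module.Dual ℝ V, p ∈ Vp ↔ ∃ X, p = (X, g X + Bf X) := by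
    intro p; rw [← SetLike.mem_coe, hVp]; rfl
  have hBself : ∀ X : V, Bf X X = 0 := fun X => by have := hB X X; linarith
  constructor
  · intro p hp hne
    obtain ⟨X, rfl⟩ := (hmem p).1 hp
    have hX : X ≠ 0 := by
      rintro rfl; exact hne (by simp)
    rw [canon_self]
    have : (g X + Bf X) X = g X X := by simp [hBself X]
    simp only [this]
    have := hpos X hX
    linarith
  · intro W hle hW
    refine le_antisymm (fun w hw => ?_) hle
    have h1 : ((w.1, g w.1 + Bf w.1) : V × Module.Dual ℝ V) ∈ Vp := (hmem _).2 ⟨w.1, rfl⟩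
    have h2 : w - (w.1, g w.1 + Bf w.1) ∈ W := W.sub_mem hw (hle h1)
    have h3 : (w - (w.1, g w.1 + Bf w.1)).1 = 0 := by simp
    have h4 : w - (w.1, g w.1 + Bf w.1) = 0 := by
      by_contra hne
      have := hW _ h2 hne
      rw [canon_self, h3, map_zero] at this
      simp at this
    have h5 : w = (w.1, g w.1 + Bf w.1) := by rwa [sub_eq_zero] at h4
    rw [h5]; exact h1

end helpers

section graph

variable {V : Type*} [AddCommGroup V] [Module ℝ V] [FiniteDimensional ℝ V]

lemma exists_graph (Vp : Submodule ℝ (V × Module.Dual ℝ V))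
    (h : IsGenMetric (canonPairing V) Vp) :
    ∃ γ : V →ₗ[ℝ] Module.Dual ℝ V,
      (Vp : Set (V × Module.Dual ℝ V)) = { p | ∃ X : V, p = (X, γ X) } ∧
      ∀ X : V, X ≠ 0 → 0 < γ X X := by
  obtain ⟨hpos, hmax⟩ := h
  set π : Vp →ₗ[ℝ] V := (LinearMap.fst ℝ V (Module.Dual ℝ V)).comp Vp.subtype with hπ
  have hπ_apply : ∀ p : Vp, π p = (p : V × Module.Dual ℝ V).1 := fun p => rfl
  -- nonnegativity of the self-pairing on Vp
  have hnn : ∀ p : V × Module.Dual ℝ V, p ∈ Vp → 0 ≤ p.2 p.1 := by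
    intro p hp
    rcases eq_or_ne p 0 with rfl | hne
    · simp
    · have := hpos p hp hne
      rw [canon_self] at this; linarith
  -- injectivity
  have hker : ∀ p : Vp, (p : V × Module.Dual ℝ V).1 = 0 → p = 0 := by
    intro p h1
    by_contra hne
    have hne' : (p : V × Module.Dual ℝ V) ≠ 0 := fun hc => hne (Subtype.ext hc)
    have := hpos _ p.2 hne'
    rw [canon_self, h1, map_zero] at this
    simp at this
  have hinj : Function.Injective π := by
    intro p q hpq
    have h0 : p - q = 0 := by
      refine hker (p - q) ?_
      have h1 : ((p - q : Vp) : V × Module.Dual ℝ V).1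
          = (p : V × Module.Dual ℝ V).1 - (q : V × Module.Dual ℝ V).1 := rfl
      rw [h1, ← hπ_apply, ← hπ_apply, hpq, sub_self]
    exact sub_eq_zero.mp h0
  -- surjectivity
  have hsurj : Function.Surjective π := by
    intro X₀
    by_contra hX₀
    have hX₀' : X₀ ∉ LinearMap.range π := by
      rintro ⟨p, rfl⟩; exact hX₀ ⟨p, rfl⟩
    set U : Submodule ℝ V := LinearMap.range π with hU
    set e : Vp ≃ₗ[ℝ] U := LinearEquiv.ofInjective π hinj with he
    set f' : U →ₗ[ℝ] ℝ :=
      -((Module.Dual.eval ℝ V X₀).comp ((LinearMap.snd ℝ V (Module.Dual ℝ V)).comp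
        (Vp.subtype.comp e.symm.toLinearMap))) with hf'
    set F : V →ₗ.[ℝ] ℝ := LinearPMap.supSpanSingleton ⟨U, f'⟩ X₀ 1 hX₀' with hF
    obtain ⟨ξ₀, hξ₀⟩ := LinearMap.exists_extend F.toFun
    -- value of ξ₀ on points of U ⊔ span X₀
    have hval : ∀ (x' : V) (hx' : x' ∈ U) (c : ℝ),
        ξ₀ (x' + c • X₀) = f' ⟨x', hx'⟩ + c := by
      intro x' hx' c
      have hmem : x' + c • X₀ ∈ F.domain := by
        rw [hF, LinearPMap.domain_supSpanSingleton]
        exact Submodule.mem_sup.2 ⟨x', hx', c • X₀,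
          Submodule.mem_span_singleton.2 ⟨c, rfl⟩, rfl⟩
      have h1 : ξ₀ (x' + c • X₀) = F.toFun ⟨x' + c • X₀, hmem⟩ :=
        LinearMap.congr_fun hξ₀ ⟨x' + c • X₀, hmem⟩
      rw [h1]
      have h2 := LinearPMap.supSpanSingleton_apply_mk ⟨U, f'⟩ X₀ 1 hX₀' x' hx' c
      simp only [RingHom.id_apply, smul_eq_mul, mul_one] at h2
      exact h2
    have hξ₀X₀ : ξ₀ X₀ = 1 := by
      have h := hval 0 U.zero_mem 1
      have h0 : (⟨0, U.zero_mem⟩ : U) = 0 := rfl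
      rw [h0, map_zero] at h
      simpa using h
    have hξ₀U : ∀ p : V × Module.Dual ℝ V, p ∈ Vp → ξ₀ p.1 = - p.2 X₀ := by
      intro p hp
      have hpU : p.1 ∈ U := ⟨⟨p, hp⟩, rfl⟩
      have h1 : ξ₀ p.1 = f' ⟨p.1, hpU⟩ := by
        have := hval p.1 hpU 0
        simpa using this
      have h2 : e.symm ⟨p.1, hpU⟩ = ⟨p, hp⟩ := by
        rw [LinearEquiv.symm_apply_eq]
        exact Subtype.ext rfl
      rw [h1, hf']
      simp [h2]
    -- the enlarged subspace
    set W : Submodule ℝ (V × Module.Dual ℝ V) :=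
      Vp ⊔ (ℝ ∙ ((X₀, ξ₀) : V × Module.Dual ℝ V)) with hW
    have hWpos : IsPosDefOn (canonPairing V) W := by
      intro w hw hwne
      obtain ⟨p, hp, z, hz, rfl⟩ := Submodule.mem_sup.1 hw
      obtain ⟨t, rfl⟩ := Submodule.mem_span_singleton.1 hz
      rw [canon_self]
      have hcomp1 : (p + t • ((X₀, ξ₀) : V × Module.Dual ℝ V)).1 = p.1 + t • X₀ := rfl
      have hcomp2 : (p + t • ((X₀, ξ₀) : V × Module.Dual ℝ V)).2 = p.2 + t • ξ₀ := rfl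
      rw [hcomp1, hcomp2]
      have hexp : (p.2 + t • ξ₀) (p.1 + t • X₀)
          = p.2 p.1 + t * p.2 X₀ + t * ξ₀ p.1 + t * (t * ξ₀ X₀) := by
        simp [map_add, LinearMap.add_apply, LinearMap.smul_apply, map_smul, smul_eq_mul]
        ring
      rw [hexp, hξ₀U p hp, hξ₀X₀]
      have hp2 : 0 ≤ p.2 p.1 := hnn p hp
      rcases eq_or_ne t 0 with rfl | ht
      · have hpne : p ≠ 0 := by simpa using hwne
        have := hpos p hp hpne
        rw [canon_self] at this
        nlinarith
      · nlinarith [sq_nonneg t, mul_self_pos.2 ht]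
    have hWeq : W = Vp := hmax W le_sup_left hWpos
    have hmemW : ((X₀, ξ₀) : V × Module.Dual ℝ V) ∈ W :=
      Submodule.mem_sup_right (Submodule.mem_span_singleton_self _)
    rw [hWeq] at hmemW
    exact hX₀ ⟨⟨(X₀, ξ₀), hmemW⟩, rfl⟩
  -- build γ
  set eqv : Vp ≃ₗ[ℝ] V := LinearEquiv.ofBijective π ⟨hinj, hsurj⟩ with heqv
  set γ : V →ₗ[ℝ] Module.Dual ℝ V :=
    (LinearMap.snd ℝ V (Module.Dual ℝ V)).comp (Vp.subtype.comp eqv.symm.toLinearMap) with hγ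
  have hγ_apply : ∀ X : V, γ X = ((eqv.symm X : Vp) : V × Module.Dual ℝ V).2 := fun X => rfl
  have key : ∀ p : V × Module.Dual ℝ V, p ∈ Vp ↔ ∃ X : V, p = (X, γ X) := by
    intro p
    constructor
    · intro hp
      refine ⟨p.1, ?_⟩
      have h1 : eqv ⟨p, hp⟩ = p.1 := rfl
      have h2 : eqv.symm p.1 = ⟨p, hp⟩ := by rw [← h1, LinearEquiv.symm_apply_apply]
      rw [hγ_apply, h2]
    · rintro ⟨X, rfl⟩
      have h1 : (eqv.symm X : Vp) = ⟨((eqv.symm X : Vp) : V × Module.Dual ℝ V), (eqv.symm X : Vp).2⟩ := rfl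
      have h2 : ((eqv.symm X : Vp) : V × Module.Dual ℝ V).1 = X := by
        have : eqv (eqv.symm X) = X := eqv.apply_symm_apply X
        exact this
      have h3 : ((X, γ X) : V × Module.Dual ℝ V) = ((eqv.symm X : Vp) : V × Module.Dual ℝ V) := by
        rw [hγ_apply]
        exact Prod.ext h2.symm rfl
      rw [h3]
      exact (eqv.symm X : Vp).2
  refine ⟨γ, ?_, ?_⟩
  · ext p; exact key p
  · intro X hX
    have hmem : ((X, γ X) : V × Module.Dual ℝ V) ∈ Vp := (key _).2 ⟨X, rfl⟩
    have hne : ((X, γ X) : V × Module.Dual ℝ V) ≠ 0 := by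
      intro hc; exact hX (congrArg Prod.fst hc)
    have := hpos _ hmem hne
    rw [canon_self] at this
    linarith

end graph

section parts

variable {V : Type*} [AddCommGroup V] [Module ℝ V]

/-- Symmetric part of a map `V →ₗ V*` as a bilinear form. -/
noncomputable def symPart (γ : V →ₗ[ℝ] Module.Dual ℝ V) : V →ₗ[ℝ] V →ₗ[ℝ] ℝ :=
  LinearMap.mk₂ ℝ (fun X Y => (γ X Y + γ Y X) / 2)
    (by intro X X' Y; simp [map_add, LinearMap.add_apply]; ring)
    (by intro c X Y; simp [map_smul, LinearMap.smul_apply, smul_eq_mul]; ring)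
    (by intro X Y Y'; simp [map_add, LinearMap.add_apply]; ring)
    (by intro c X Y; simp [map_smul, LinearMap.smul_apply, smul_eq_mul]; ring)

/-- Antisymmetric part of a map `V →ₗ V*` as a bilinear form. -/
noncomputable def altPart (γ : V →ₗ[ℝ] Module.Dual ℝ V) : V →ₗ[ℝ] V →ₗ[ℝ] ℝ :=
  LinearMap.mk₂ ℝ (fun X Y => (γ X Y - γ Y X) / 2)
    (by intro X X' Y; simp [map_add, LinearMap.add_apply]; ring)
    (by intro c X Y; simp [map_smul, LinearMap.smul_apply, smul_eq_mul]; ring)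
    (by intro X Y Y'; simp [map_add, LinearMap.add_apply]; ring)
    (by intro c X Y; simp [map_smul, LinearMap.smul_apply, smul_eq_mul]; ring)

lemma symPart_apply (γ : V →ₗ[ℝ] Module.Dual ℝ V) (X Y : V) :
    symPart γ X Y = (γ X Y + γ Y X) / 2 := rfl

lemma altPart_apply (γ : V →ₗ[ℝ] Module.Dual ℝ V) (X Y : V) :
    altPart γ X Y = (γ X Y - γ Y X) / 2 := rfl

lemma pair_unique (g g' Bf Bf' : V →ₗ[ℝ] V →ₗ[ℝ] ℝ)
    (hsym : ∀ X Y : V, g X Y = g Y X) (hsym' : ∀ X Y : V, g' X Y = g' Y X)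
    (hanti : ∀ X Y : V, Bf X Y = - Bf Y X) (hanti' : ∀ X Y : V, Bf' X Y = - Bf' Y X)
    (h : ({ p | ∃ X : V, p = (X, g X + Bf X) } : Set (V × Module.Dual ℝ V))
      = { p | ∃ X : V, p = (X, g' X + Bf' X) }) : g = g' ∧ Bf = Bf' := by
  have hpt : ∀ X Y : V, g X Y + Bf X Y = g' X Y + Bf' X Y := by
    intro X Y
    have h1 : ((X, g X + Bf X) : V × Module.Dual ℝ V) ∈
        ({ p | ∃ X : V, p = (X, g X + Bf X) } : Set (V × Module.Dual ℝ V)) := ⟨X, rfl⟩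
    rw [h] at h1
    obtain ⟨X', hX'⟩ := h1
    have h2 : X = X' := congrArg Prod.fst hX'
    subst h2
    have h3 : (g X + Bf X : Module.Dual ℝ V) = g' X + Bf' X := congrArg Prod.snd hX'
    have := LinearMap.congr_fun h3 Y
    simpa using this
  constructor
  · ext X Y
    have h1 := hpt X Y
    have h2 := hpt Y X
    rw [hsym Y X, hsym' Y X, hanti Y X, hanti' Y X] at h2
    linarith
  · ext X Y
    have h1 := hpt X Y
    have h2 := hpt Y X
    rw [hsym Y X, hsym' Y X, hanti Y X, hanti' Y X] at h2
    linarith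

lemma orth_graph (Vp : Submodule ℝ (V × Module.Dual ℝ V))
    (g Bf : V →ₗ[ℝ] V →ₗ[ℝ] ℝ)
    (hsym : ∀ X Y : V, g X Y = g Y X)
    (hanti : ∀ X Y : V, Bf X Y = - Bf Y X)
    (hVp : (Vp : Set (V × Module.Dual ℝ V)) = { p | ∃ X : V, p = (X, g X + Bf X) }) :
    ((LinearMap.BilinForm.orthogonal (canonPairing V) Vp : Submodule ℝ _) :
      Set (V × Module.Dual ℝ V)) = { p | ∃ X : V, p = (X, - g X + Bf X) } := by
  have hmem : ∀ p : V × Module.Dual ℝ V, p ∈ Vp ↔ ∃ X, p = (X, g X + Bf X) := by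
    intro p; rw [← SetLike.mem_coe, hVp]; rfl
  ext p
  simp only [SetLike.mem_coe, LinearMap.BilinForm.mem_orthogonal_iff, Set.mem_setOf_eq]
  constructor
  · intro hp
    refine ⟨p.1, ?_⟩
    have h2 : p.2 = - g p.1 + Bf p.1 := by
      ext Y
      have hY := hp (Y, g Y + Bf Y) ((hmem _).2 ⟨Y, rfl⟩)
      have hY' : p.2 Y + (g Y + Bf Y) p.1 = 0 := hY
      have e1 : (g Y + Bf Y) p.1 = g Y p.1 + Bf Y p.1 := rfl
      rw [e1] at hY'
      have e2 : (- g p.1 + Bf p.1 : Module.Dual ℝ V) Y = - g p.1 Y + Bf p.1 Y := rfl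
      rw [e2, hsym p.1 Y, hanti p.1 Y]
      linarith
    exact Prod.ext rfl h2
  · rintro ⟨X, rfl⟩
    intro n hn
    obtain ⟨Y, rfl⟩ := (hmem n).1 hn
    show canonPairing V _ _ = 0
    rw [canon_apply]
    have e1 : ((X, - g X + Bf X) : V × Module.Dual ℝ V).2 Y = - g X Y + Bf X Y := rfl
    have e2 : ((Y, g Y + Bf Y) : V × Module.Dual ℝ V).2 X = g Y X + Bf Y X := rfl
    rw [e1, e2]
    have := hsym X Y
    have := hanti X Y
    linarith

end parts


/-- Generalized metrics on `V ⊕ V*` are exactly the graphs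
`{(X, g(X,·) + B(X,·))}` of a positive definite symmetric `g` and an antisymmetric `B`;
the pair `(g,B)` is unique; the orthogonal complement is `{(X, −g(X,·) + B(X,·))}`. -/
theorem genMetric_on_double_iff
    {V : Type*} [AddCommGroup V] [Module ℝ V] [FiniteDimensional ℝ V]
    (Vp : Submodule ℝ (V × Module.Dual ℝ V)) :
    (IsGenMetric (canonPairing V) Vp ↔
      ∃ g Bf : V →ₗ[ℝ] V →ₗ[ℝ] ℝ,
        (∀ X Y : V, g X Y = g Y X) ∧ (∀ X : V, X ≠ 0 → 0 < g X X) ∧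
        (∀ X Y : V, Bf X Y = - Bf Y X) ∧
        (Vp : Set (V × Module.Dual ℝ V)) = { p | ∃ X : V, p = (X, g X + Bf X) }) ∧
    (IsGenMetric (canonPairing V) Vp →
      ∃! gB : (V →ₗ[ℝ] V →ₗ[ℝ] ℝ) × (V →ₗ[ℝ] V →ₗ[ℝ] ℝ),
        (∀ X Y : V, gB.1 X Y = gB.1 Y X) ∧ (∀ X : V, X ≠ 0 → 0 < gB.1 X X) ∧
        (∀ X Y : V, gB.2 X Y = - gB.2 Y X) ∧
        (Vp : Set (V × Module.Dual ℝ V)) = { p | ∃ X : V, p = (X, gB.1 X + gB.2 X) }) ∧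
    (∀ g Bf : V →ₗ[ℝ] V →ₗ[ℝ] ℝ,
      (∀ X Y : V, g X Y = g Y X) → (∀ X : V, X ≠ 0 → 0 < g X X) →
      (∀ X Y : V, Bf X Y = - Bf Y X) →
      (Vp : Set (V × Module.Dual ℝ V)) = { p | ∃ X : V, p = (X, g X + Bf X) } →
      ((LinearMap.BilinForm.orthogonal (canonPairing V) Vp : Submodule ℝ _) : Set (V × Module.Dual ℝ V))
        = { p | ∃ X : V, p = (X, - g X + Bf X) }) := by
  have main : IsGenMetric (canonPairing V) Vp ↔
      ∃ g Bf : V →ₗ[ℝ] V →ₗ[ℝ] ℝ,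
        (∀ X Y : V, g X Y = g Y X) ∧ (∀ X : V, X ≠ 0 → 0 < g X X) ∧
        (∀ X Y : V, Bf X Y = - Bf Y X) ∧
        (Vp : Set (V × Module.Dual ℝ V)) = { p | ∃ X : V, p = (X, g X + Bf X) } := by
    constructor
    · intro h
      obtain ⟨γ, hgraph, hγpos⟩ := exists_graph Vp h
      refine ⟨symPart γ, altPart γ, fun X Y => ?_, fun X hX => ?_, fun X Y => ?_, ?_⟩
      · rw [symPart_apply, symPart_apply]; ring
      · rw [symPart_apply]
        have := hγpos X hX
        linarith
      · rw [altPart_apply, altPart_apply]; ring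
      · rw [hgraph]
        have hfix : ∀ X : V, (symPart γ X + altPart γ X : Module.Dual ℝ V) = γ X := by
          intro X
          ext Y
          have : (symPart γ X + altPart γ X : Module.Dual ℝ V) Y
              = symPart γ X Y + altPart γ X Y := rfl
          rw [this, symPart_apply, altPart_apply]
          ring
        ext p
        constructor
        · rintro ⟨X, rfl⟩; exact ⟨X, by rw [hfix]⟩
        · rintro ⟨X, rfl⟩; exact ⟨X, by rw [hfix]⟩
    · rintro ⟨g, Bf, hsym, hpos, hanti, hVp⟩
      exact graph_isGenMetric Vp g Bf hpos hanti hVp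
  refine ⟨main, ?_, ?_⟩
  · intro h
    obtain ⟨g, Bf, hsym, hpos, hanti, hVp⟩ := main.1 h
    refine ⟨(g, Bf), ⟨hsym, hpos, hanti, hVp⟩, ?_⟩
    rintro ⟨g', Bf'⟩ ⟨hsym', hpos', hanti', hVp'⟩
    obtain ⟨hg, hB⟩ := pair_unique g' g Bf' Bf hsym' hsym hanti' hanti (hVp'.symm.trans hVp)
    exact Prod.ext hg hB
  · intro g Bf hsym hpos hanti hVp
    exact orth_graph Vp g Bf hsym hanti hVp
end

section
/- Let V₊ ⊆ 𝔡 be a generalized metric, V₋ := V₊^⊥, and write x = x₊ + x₋ for the induced decomposition of x ∈ 𝔡. Then there is a unique connection ∇ on 𝔡 satisfying ⟨∇ₓy, z⟩ = (1/3)·⟨[x₊,y₊], z₊⟩ + (1/3)·⟨[x₋,y₋], z₋⟩ + ⟨[x₊,y₋], z₋⟩ + ⟨[x₋,y₊], z₊⟩ for all x,y,z ∈ 𝔡, and this ∇ is Levi-Civita with respect to V₊ with vanishing divergence: it preserves the splitting (∇ₓ(V₊) ⊆ V₊ and ∇ₓ(V₋) ⊆ V₋ for all x ∈ 𝔡), it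 is torsion-free (T_∇ = 0), and Div_∇(y) = 0 for all y ∈ 𝔡. -/
/-- A (metric) connection on a quadratic Lie algebra: a bilinear map `∇` with
`⟨∇ₓy,z⟩ + ⟨y,∇ₓz⟩ = 0`. -/
def IsConnection {𝔡 : Type*} [LieRing 𝔡] [LieAlgebra ℝ 𝔡]
    (B : 𝔡 →ₗ[ℝ] 𝔡 →ₗ[ℝ] ℝ) (D : 𝔡 →ₗ[ℝ] 𝔡 →ₗ[ℝ] 𝔡) : Prop :=
  ∀ x y z : 𝔡, B (D x y) z + B y (D x z) = 0

lemma aux_trace_skew {E : Type*} [AddCommGroup E] [Module ℝ E] [FiniteDimensional ℝ E]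
    (B : LinearMap.BilinForm ℝ E) (hB : B.Nondegenerate) (hsymm : ∀ x y : E, B x y = B y x)
    (M : E →ₗ[ℝ] E) (h : ∀ x z : E, B (M x) z + B (M z) x = 0) :
    LinearMap.trace ℝ E M = 0 := by
  set Φ := B.toDual hB with hΦ
  have key : M = -(Φ.symm.toLinearMap ∘ₗ
      ((Module.Dual.transpose (R := ℝ) M) ∘ₗ Φ.toLinearMap)) := by
    ext x
    simp only [LinearMap.neg_apply, LinearMap.comp_apply, LinearEquiv.coe_coe]
    rw [eq_neg_iff_add_eq_zero, ← LinearEquiv.symm_apply_apply Φ (M x), ← map_add]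
    rw [map_eq_zero_iff _ Φ.symm.injective]
    ext z
    have h1 : Φ (M x) z = B (M x) z := rfl
    have h2 : (Module.Dual.transpose (R := ℝ) M) (Φ x) z = B x (M z) := rfl
    simp only [LinearMap.add_apply, h1, h2, LinearMap.zero_apply]
    have := h x z
    rw [hsymm (M z) x] at this
    linarith
  have t1 : LinearMap.trace ℝ E M
      = -(LinearMap.trace ℝ E (Φ.symm.toLinearMap ∘ₗ
          ((Module.Dual.transpose (R := ℝ) M) ∘ₗ Φ.toLinearMap))) := by
    conv_lhs => rw [key]
    rw [map_neg]
  rw [LinearMap.trace_comp_comm'] at t1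
  have t2 : ((Module.Dual.transpose (R := ℝ) M) ∘ₗ Φ.toLinearMap) ∘ₗ Φ.symm.toLinearMap
      = Module.Dual.transpose (R := ℝ) M := by
    ext φ; simp
  rw [t2, LinearMap.trace_transpose'] at t1
  linarith

attribute [local instance 100] LieRing.ofAssociativeRing

noncomputable def canonD {𝔡 : Type*} [LieRing 𝔡] [LieAlgebra ℝ 𝔡] [FiniteDimensional ℝ 𝔡]
    (B : LinearMap.BilinForm ℝ 𝔡) (hB : B.Nondegenerate) (P : 𝔡 →ₗ[ℝ] 𝔡) :
    𝔡 →ₗ[ℝ] 𝔡 →ₗ[ℝ] 𝔡 :=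
  let br : 𝔡 →ₗ[ℝ] 𝔡 →ₗ[ℝ] 𝔡 := (LieAlgebra.ad ℝ 𝔡).toLinearMap
  let Q : 𝔡 →ₗ[ℝ] 𝔡 := LinearMap.id - P
  let G : 𝔡 →ₗ[ℝ] 𝔡 →ₗ[ℝ] (Module.Dual ℝ 𝔡) :=
    (3:ℝ)⁻¹ • ((br.compl₁₂ P P).compr₂ (B.compl₂ P))
    + (3:ℝ)⁻¹ • ((br.compl₁₂ Q Q).compr₂ (B.compl₂ Q))
    + ((br.compl₁₂ P Q).compr₂ (B.compl₂ Q))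
    + ((br.compl₁₂ Q P).compr₂ (B.compl₂ P))
  G.compr₂ (B.toDual hB).symm.toLinearMap

lemma canonD_apply {𝔡 : Type*} [LieRing 𝔡] [LieAlgebra ℝ 𝔡] [FiniteDimensional ℝ 𝔡]
    (B : LinearMap.BilinForm ℝ 𝔡) (hB : B.Nondegenerate) (P : 𝔡 →ₗ[ℝ] 𝔡) (x y z : 𝔡) :
    B (canonD B hB P x y) z
      = (3:ℝ)⁻¹ * B ⁅P x, P y⁆ (P z) + (3:ℝ)⁻¹ * B ⁅x - P x, y - P y⁆ (z - P z)
        + B ⁅P x, y - P y⁆ (z - P z) + B ⁅x - P x, P y⁆ (P z) := by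
  simp [canonD, LinearMap.compr₂_apply, LinearMap.compl₁₂_apply, LinearMap.compl₂_apply,
    LinearMap.BilinForm.apply_toDual_symm_apply, LieAlgebra.ad_apply,
    LinearMap.sub_apply, LinearMap.add_apply, LinearMap.smul_apply, smul_eq_mul]
  ring


/-- On a quadratic Lie algebra `𝔡` with a generalized metric `V₊`
(`V₋ = V₊^⊥`, `x = x₊ + x₋`), there is a unique connection `∇` with
`⟨∇ₓy,z⟩ = (1/3)⟨[x₊,y₊],z₊⟩ + (1/3)⟨[x₋,y₋],z₋⟩ + ⟨[x₊,y₋],z₋⟩ + ⟨[x₋,y₊],z₊⟩`,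
and this `∇` preserves the splitting, is torsion-free and has vanishing divergence. -/
theorem canonical_connection_quadratic_lie
    {𝔡 : Type*} [LieRing 𝔡] [LieAlgebra ℝ 𝔡] [FiniteDimensional ℝ 𝔡]
    (B : 𝔡 →ₗ[ℝ] 𝔡 →ₗ[ℝ] ℝ)
    (hsymm : ∀ x y : 𝔡, B x y = B y x)
    (hnondeg : ∀ x : 𝔡, (∀ y : 𝔡, B x y = 0) → x = 0)
    (hinv : ∀ x y z : 𝔡, B ⁅x, y⁆ z = B x ⁅y, z⁆)
    (Vp : Submodule ℝ 𝔡) (hVp : IsGenMetric B Vp) :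
    (∃! D : 𝔡 →ₗ[ℝ] 𝔡 →ₗ[ℝ] 𝔡, IsConnection B D ∧
      (∀ x xp xm y yp ym z zp zm : 𝔡,
        xp ∈ Vp → xm ∈ LinearMap.BilinForm.orthogonal B Vp → x = xp + xm →
        yp ∈ Vp → ym ∈ LinearMap.BilinForm.orthogonal B Vp → y = yp + ym →
        zp ∈ Vp → zm ∈ LinearMap.BilinForm.orthogonal B Vp → z = zp + zm →
        B (D x y) z = (3 : ℝ)⁻¹ * B ⁅xp, yp⁆ zp + (3 : ℝ)⁻¹ * B ⁅xm, ym⁆ zm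
          + B ⁅xp, ym⁆ zm + B ⁅xm, yp⁆ zp)) ∧
    (∀ D : 𝔡 →ₗ[ℝ] 𝔡 →ₗ[ℝ] 𝔡, IsConnection B D →
      (∀ x xp xm y yp ym z zp zm : 𝔡,
        xp ∈ Vp → xm ∈ LinearMap.BilinForm.orthogonal B Vp → x = xp + xm →
        yp ∈ Vp → ym ∈ LinearMap.BilinForm.orthogonal B Vp → y = yp + ym →
        zp ∈ Vp → zm ∈ LinearMap.BilinForm.orthogonal B Vp → z = zp + zm →
        B (D x y) z = (3 : ℝ)⁻¹ * B ⁅xp, yp⁆ zp + (3 : ℝ)⁻¹ * B ⁅xm, ym⁆ zm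
          + B ⁅xp, ym⁆ zm + B ⁅xm, yp⁆ zp) →
      -- the connection preserves the splitting,
      (∀ x : 𝔡, ∀ y ∈ Vp, D x y ∈ Vp) ∧
      (∀ x : 𝔡, ∀ y ∈ LinearMap.BilinForm.orthogonal B Vp,
        D x y ∈ LinearMap.BilinForm.orthogonal B Vp) ∧
      -- it is torsion-free,
      (∀ x y z : 𝔡, B (D x y - D y x - ⁅x, y⁆) z + B (D z x) y = 0) ∧
      -- and its divergence vanishes.
      (∀ y : 𝔡, LinearMap.trace ℝ 𝔡 (D.flip y) = 0)) := by
  obtain ⟨hpos, -⟩ := hVp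
  set Vm := LinearMap.BilinForm.orthogonal B Vp with hVmdef
  have hB : LinearMap.BilinForm.Nondegenerate B :=
    ⟨hnondeg, fun y hy => hnondeg y (fun x => by rw [hsymm]; exact hy x)⟩
  have hrefl : LinearMap.IsRefl B := fun x y h => by rw [hsymm]; exact h
  have hrestrict : LinearMap.BilinForm.Nondegenerate (LinearMap.BilinForm.restrict B Vp) := by
    refine ⟨?_, ?_⟩
    all_goals
      rintro ⟨v, hv⟩ hvz
      refine Subtype.ext ?_
      by_contra h0
      have hBvv : B v v = 0 := by simpa using hvz ⟨v, hv⟩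
      exact absurd hBvv (ne_of_gt (hpos v hv h0))
  have hcompl : IsCompl Vp Vm :=
    LinearMap.BilinForm.isCompl_orthogonal_of_restrict_nondegenerate (B := B) hrefl hrestrict
  set P : 𝔡 →ₗ[ℝ] 𝔡 := Vp.subtype ∘ₗ Vp.projectionOnto Vm hcompl with hPdef
  have hPmem : ∀ x, P x ∈ Vp := fun x => (Vp.projectionOnto Vm hcompl x).2
  have hPl : ∀ v ∈ Vp, P v = v := fun v hv =>
    congrArg Subtype.val (Submodule.projectionOnto_apply_left hcompl ⟨v, hv⟩)
  have hPr : ∀ w ∈ Vm, P w = 0 := fun w hw =>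
    congrArg Subtype.val (Submodule.projectionOnto_apply_right hcompl ⟨w, hw⟩)
  have hQmem : ∀ x, x - P x ∈ Vm := by
    intro x
    obtain ⟨p, hp, q, hq, hpq⟩ := Submodule.mem_sup.1
      (show x ∈ Vp ⊔ Vm by rw [hcompl.sup_eq_top]; exact Submodule.mem_top)
    have hPx : P x = p := by rw [← hpq, map_add, hPl p hp, hPr q hq, add_zero]
    have : x - P x = q := by rw [hPx, ← hpq]; abel
    rw [this]; exact hq
  have hdecompP : ∀ x xp xm, xp ∈ Vp → xm ∈ Vm → x = xp + xm → P x = xp := by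
    intro x xp xm h1 h2 h3; rw [h3, map_add, hPl xp h1, hPr xm h2, add_zero]
  have hdecompQ : ∀ x xp xm, xp ∈ Vp → xm ∈ Vm → x = xp + xm → x - P x = xm := by
    intro x xp xm h1 h2 h3
    rw [hdecompP x xp xm h1 h2 h3, h3]; abel
  have horthPM : ∀ v ∈ Vp, ∀ w ∈ Vm, B v w = 0 := fun v hv w hw => hw v hv
  have horthMP : ∀ w ∈ Vm, ∀ v ∈ Vp, B w v = 0 := fun w hw v hv => by
    rw [hsymm]; exact hw v hv
  -- skew-symmetry of (a,b,c) ↦ B ⁅a,b⁆ c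
  have hsk12 : ∀ a b c : 𝔡, B ⁅a, b⁆ c = -B ⁅b, a⁆ c := by
    intro a b c; rw [← lie_skew b a, map_neg, LinearMap.neg_apply, neg_neg]
  have hsk23 : ∀ a b c : 𝔡, B ⁅a, b⁆ c = -B ⁅a, c⁆ b := by
    intro a b c; rw [hinv a b c, hinv a c b, ← lie_skew b c, map_neg]
  have hcyc : ∀ a b c : 𝔡, B ⁅a, b⁆ c = B ⁅c, a⁆ b := by
    intro a b c; rw [hinv c a b, hsymm]
  have hsk13 : ∀ a b c : 𝔡, B ⁅a, b⁆ c = -B ⁅c, b⁆ a := by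
    intro a b c; rw [hcyc a b c, hsk12 c a b, ← hcyc c b a]
  set D0 := canonD B hB P with hD0def
  have key : ∀ x y z : 𝔡, B (D0 x y) z
      = (3:ℝ)⁻¹ * B ⁅P x, P y⁆ (P z) + (3:ℝ)⁻¹ * B ⁅x - P x, y - P y⁆ (z - P z)
        + B ⁅P x, y - P y⁆ (z - P z) + B ⁅x - P x, P y⁆ (P z) :=
    fun x y z => canonD_apply B hB P x y z
  -- any D with the formula property satisfies the concrete identity
  have keyOf : ∀ D : 𝔡 →ₗ[ℝ] 𝔡 →ₗ[ℝ] 𝔡,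
      (∀ x xp xm y yp ym z zp zm : 𝔡,
        xp ∈ Vp → xm ∈ Vm → x = xp + xm →
        yp ∈ Vp → ym ∈ Vm → y = yp + ym →
        zp ∈ Vp → zm ∈ Vm → z = zp + zm →
        B (D x y) z = (3 : ℝ)⁻¹ * B ⁅xp, yp⁆ zp + (3 : ℝ)⁻¹ * B ⁅xm, ym⁆ zm
          + B ⁅xp, ym⁆ zm + B ⁅xm, yp⁆ zp) →
      ∀ x y z : 𝔡, B (D x y) z
        = (3:ℝ)⁻¹ * B ⁅P x, P y⁆ (P z) + (3:ℝ)⁻¹ * B ⁅x - P x, y - P y⁆ (z - P z)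
          + B ⁅P x, y - P y⁆ (z - P z) + B ⁅x - P x, P y⁆ (P z) := by
    intro D hF x y z
    exact hF x (P x) (x - P x) y (P y) (y - P y) z (P z) (z - P z)
      (hPmem x) (hQmem x) (by abel) (hPmem y) (hQmem y) (by abel)
      (hPmem z) (hQmem z) (by abel)
  -- D0 satisfies the formula property
  have hfml0 : ∀ x xp xm y yp ym z zp zm : 𝔡,
      xp ∈ Vp → xm ∈ Vm → x = xp + xm →
      yp ∈ Vp → ym ∈ Vm → y = yp + ym →
      zp ∈ Vp → zm ∈ Vm → z = zp + zm →
      B (D0 x y) z = (3 : ℝ)⁻¹ * B ⁅xp, yp⁆ zp + (3 : ℝ)⁻¹ * B ⁅xm, ym⁆ zm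
        + B ⁅xp, ym⁆ zm + B ⁅xm, yp⁆ zp := by
    intro x xp xm y yp ym z zp zm hxp hxm hx hyp hym hy hzp hzm hz
    rw [key x y z, hdecompQ x xp xm hxp hxm hx, hdecompP x xp xm hxp hxm hx,
      hdecompQ y yp ym hyp hym hy, hdecompP y yp ym hyp hym hy,
      hdecompQ z zp zm hzp hzm hz, hdecompP z zp zm hzp hzm hz]
  -- D0 is a connection
  have hconn0 : IsConnection B D0 := by
    intro x y z
    rw [hsymm y (D0 x z), key x y z, key x z y]
    have h1 := hsk23 (P x) (P y) (P z)
    have h2 := hsk23 (x - P x) (y - P y) (z - P z)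
    have h3 := hsk23 (P x) (y - P y) (z - P z)
    have h4 := hsk23 (x - P x) (P y) (P z)
    linarith
  -- a generic consequence: everything with the concrete identity satisfies the 4 properties
  have hmain : ∀ D : 𝔡 →ₗ[ℝ] 𝔡 →ₗ[ℝ] 𝔡,
      (∀ x y z : 𝔡, B (D x y) z
        = (3:ℝ)⁻¹ * B ⁅P x, P y⁆ (P z) + (3:ℝ)⁻¹ * B ⁅x - P x, y - P y⁆ (z - P z)
          + B ⁅P x, y - P y⁆ (z - P z) + B ⁅x - P x, P y⁆ (P z)) →
      (∀ x : 𝔡, ∀ y ∈ Vp, D x y ∈ Vp) ∧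
      (∀ x : 𝔡, ∀ y ∈ Vm, D x y ∈ Vm) ∧
      (∀ x y z : 𝔡, B (D x y - D y x - ⁅x, y⁆) z + B (D z x) y = 0) ∧
      (∀ y : 𝔡, LinearMap.trace ℝ 𝔡 (D.flip y) = 0) := by
    intro D keyD
    have hBsplit : ∀ v w : 𝔡, B v w = B v (P w) + B v (w - P w) := by
      intro v w; rw [← map_add]; congr 1; abel
    have hBsplitL : ∀ v w : 𝔡, B v w = B (P v) w + B (v - P v) w := by
      intro v w
      have : (P v) + (v - P v) = v := by abel
      rw [← this, map_add, LinearMap.add_apply, this]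
    refine ⟨?_, ?_, ?_, ?_⟩
    · -- preserves Vp
      intro x y hy
      have hPy : P y = y := hPl y hy
      have h0 : ∀ z ∈ Vm, B (D x y) z = 0 := by
        intro z hz
        rw [keyD x y z, hPy, hPr z hz]
        simp [sub_self]
      have hq := hQmem (D x y)
      have hall : ∀ w, B (D x y - P (D x y)) w = 0 := by
        intro w
        rw [hBsplit _ w]
        have e1 : B (D x y - P (D x y)) (P w) = 0 := horthMP _ hq (P w) (hPmem w)
        have e2 : B (D x y - P (D x y)) (w - P w) = 0 := by
          have t1 := h0 (w - P w) (hQmem w)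
          have t2 : B (P (D x y)) (w - P w) = 0 :=
            horthPM _ (hPmem _) _ (hQmem w)
          simp only [map_sub, LinearMap.sub_apply] at t1 t2 ⊢
          linarith
        rw [e1, e2, add_zero]
      have hz := hnondeg _ hall
      rw [sub_eq_zero] at hz
      rw [hz]; exact hPmem _
    · -- preserves Vm
      intro x y hy
      have hPy : P y = 0 := hPr y hy
      intro n hn
      show B n (D x y) = 0
      rw [hsymm n (D x y), keyD x y n, hPy, hPl n hn]
      simp [sub_self]
    · -- torsion-free
      intro x y z
      simp only [map_sub, LinearMap.sub_apply]
      rw [keyD x y z, keyD y x z, keyD z x y]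
      have hbr : (⁅x, y⁆ : 𝔡)
          = ⁅P x, P y⁆ + ⁅P x, y - P y⁆ + ⁅x - P x, P y⁆ + ⁅x - P x, y - P y⁆ := by
        simp only [lie_sub, sub_lie]; abel
      have hexp : B ⁅x, y⁆ z
          = B ⁅P x, P y⁆ (P z) + B ⁅P x, P y⁆ (z - P z)
          + B ⁅P x, y - P y⁆ (P z) + B ⁅P x, y - P y⁆ (z - P z)
          + B ⁅x - P x, P y⁆ (P z) + B ⁅x - P x, P y⁆ (z - P z)
          + B ⁅x - P x, y - P y⁆ (P z) + B ⁅x - P x, y - P y⁆ (z - P z) := by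
        rw [hbr]
        simp only [map_add, LinearMap.add_apply]
        rw [hBsplit ⁅P x, P y⁆ z, hBsplit ⁅P x, y - P y⁆ z,
          hBsplit ⁅x - P x, P y⁆ z, hBsplit ⁅x - P x, y - P y⁆ z]
        ring
      have f1 := hsk12 (P y) (P x) (P z)
      have f2 := hsk12 (y - P y) (x - P x) (z - P z)
      have f3 := hsk12 (P y) (x - P x) (z - P z)
      have f4 := hsk12 (y - P y) (P x) (P z)
      have g1 := hcyc (P x) (P y) (P z)
      have g2 := hcyc (x - P x) (y - P y) (z - P z)
      have g3 := hcyc (x - P x) (y - P y) (P z)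
      have g4 := hcyc (P x) (P y) (z - P z)
      linarith
    · -- divergence
      intro y
      set L := D.flip y with hLdef
      have hLapp : ∀ x, L x = D x y := fun x => rfl
      have hPP : ∀ x, P (P x) = P x := fun x => hPl _ (hPmem x)
      have hP2 : P ∘ₗ P = P := LinearMap.ext hPP
      set Q : 𝔡 →ₗ[ℝ] 𝔡 := LinearMap.id - P with hQdef
      have hQapp : ∀ x, Q x = x - P x := fun x => rfl
      have hPQ0 : ∀ v, P (v - P v) = 0 := by
        intro v; rw [map_sub, hPP, sub_self]
      -- trace splitting
      have hsum : L ∘ₗ P + L ∘ₗ Q = L := by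
        ext x
        simp only [LinearMap.add_apply, LinearMap.comp_apply, hQapp, map_sub]
        abel
      have c1 : LinearMap.trace ℝ 𝔡 (L ∘ₗ P) = LinearMap.trace ℝ 𝔡 (P ∘ₗ (L ∘ₗ P)) := by
        have h' : L ∘ₗ P = (L ∘ₗ P) ∘ₗ P := by rw [LinearMap.comp_assoc, hP2]
        conv_lhs => rw [h']
        exact LinearMap.trace_comp_comm' P (L ∘ₗ P)
      have hQ2 : Q ∘ₗ Q = Q := by
        ext x
        simp only [LinearMap.comp_apply, hQapp]
        rw [map_sub, hPP, sub_self, sub_zero]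
      have c2 : LinearMap.trace ℝ 𝔡 (L ∘ₗ Q) = LinearMap.trace ℝ 𝔡 (Q ∘ₗ (L ∘ₗ Q)) := by
        have h' : L ∘ₗ Q = (L ∘ₗ Q) ∘ₗ Q := by rw [LinearMap.comp_assoc, hQ2]
        conv_lhs => rw [h']
        exact LinearMap.trace_comp_comm' Q (L ∘ₗ Q)
      -- move P / Q across B
      have moveP : ∀ v w : 𝔡, B (P v) w = B v (P w) := by
        intro v w
        have e1 : B (P v) w = B (P v) (P w) + B (P v) (w - P w) := hBsplit (P v) w
        have e2 : B v (P w) = B (P v) (P w) + B (v - P v) (P w) := hBsplitL v (P w)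
        rw [e1, e2, horthPM _ (hPmem v) (w - P w) (hQmem w),
          horthMP _ (hQmem v) (P w) (hPmem w)]
      have moveQ : ∀ v w : 𝔡, B (v - P v) w = B v (w - P w) := by
        intro v w
        have e1 : B (v - P v) w = B (v - P v) (P w) + B (v - P v) (w - P w) :=
          hBsplit (v - P v) w
        have e2 : B v (w - P w) = B (P v) (w - P w) + B (v - P v) (w - P w) :=
          hBsplitL v (w - P w)
        rw [e1, e2, horthMP _ (hQmem v) (P w) (hPmem w),
          horthPM _ (hPmem v) (w - P w) (hQmem w)]
      -- skewness of the two blocks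
      have s1 : ∀ u w : 𝔡, B ((P ∘ₗ (L ∘ₗ P)) u) w + B ((P ∘ₗ (L ∘ₗ P)) w) u = 0 := by
        have e : ∀ u w : 𝔡, B ((P ∘ₗ (L ∘ₗ P)) u) w = (3:ℝ)⁻¹ * B ⁅P u, P y⁆ (P w) := by
          intro u w
          show B (P (D (P u) y)) w = _
          rw [moveP, keyD (P u) y (P w), hPP u, hPP w]
          simp [sub_self]
        intro u w
        rw [e u w, e w u]
        have := hsk13 (P u) (P y) (P w)
        linarith
      have s2 : ∀ u w : 𝔡, B ((Q ∘ₗ (L ∘ₗ Q)) u) w + B ((Q ∘ₗ (L ∘ₗ Q)) w) u = 0 := by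
        have e : ∀ u w : 𝔡,
            B ((Q ∘ₗ (L ∘ₗ Q)) u) w = (3:ℝ)⁻¹ * B ⁅u - P u, y - P y⁆ (w - P w) := by
          intro u w
          show B ((D (u - P u) y) - P (D (u - P u) y)) w = _
          rw [moveQ, keyD (u - P u) y (w - P w), hPQ0 u, hPQ0 w]
          simp [sub_zero]
        intro u w
        rw [e u w, e w u]
        have := hsk13 (u - P u) (y - P y) (w - P w)
        linarith
      have z1 := aux_trace_skew B hB hsymm _ s1
      have z2 := aux_trace_skew B hB hsymm _ s2
      calc LinearMap.trace ℝ 𝔡 L = LinearMap.trace ℝ 𝔡 (L ∘ₗ P + L ∘ₗ Q) := by rw [hsum]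
        _ = LinearMap.trace ℝ 𝔡 (L ∘ₗ P) + LinearMap.trace ℝ 𝔡 (L ∘ₗ Q) := map_add _ _ _
        _ = 0 := by rw [c1, c2, z1, z2, add_zero]
  constructor
  · refine ⟨D0, ⟨hconn0, hfml0⟩, ?_⟩
    rintro D ⟨-, hF⟩
    have keyD := keyOf D hF
    ext x y
    have hall : ∀ z, B (D x y - D0 x y) z = 0 := by
      intro z
      rw [map_sub, LinearMap.sub_apply, keyD x y z, key x y z]
      ring
    have := hnondeg _ hall
    rwa [sub_eq_zero] at this
  · intro D _ hF
    exact hmain D (keyOf D hF)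
end

section
/- Let V₊ ⊆ 𝔡 be a generalized metric with V₋ := V₊^⊥, and assume dim V₊ ≠ 1 and dim V₋ ≠ 1. Then for every linear functional δ : 𝔡 → ℝ there exists a connection ∇ on 𝔡 which preserves the splitting (∇ₓ(V₊) ⊆ V₊ for all x ∈ 𝔡), is torsion-free (T_∇ = 0), and has prescribed divergence Div_∇ = δ, i.e., Tr(x ↦ ∇ₓy) = δ(y) for all y ∈ 𝔡. -/
set_option maxHeartbeats 1000000

/-- Trace of the rank-one map `x ↦ f x • e`. -/
lemma trace_smulRight_aux {M : Type*} [AddCommGroup M] [Module ℝ M] [FiniteDimensional ℝ M]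
    (f : M →ₗ[ℝ] ℝ) (e : M) :
    LinearMap.trace ℝ M (f.smulRight e) = f e := by
  have h : f.smulRight e = (LinearMap.toSpanSingleton ℝ M e) ∘ₗ f := by
    ext x; simp [LinearMap.toSpanSingleton]
  rw [h, LinearMap.trace_comp_comm']
  have h2 : f ∘ₗ LinearMap.toSpanSingleton ℝ M e = f e • LinearMap.id := by
    ext
    simp [LinearMap.toSpanSingleton, smul_eq_mul, mul_comm]
  rw [h2, map_smul, LinearMap.trace_id]
  simp

/-- Riesz representation on a subspace where `B` is definite. -/
lemma exists_rep_aux {E : Type*} [AddCommGroup E] [Module ℝ E] [FiniteDimensional ℝ E]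
    (B : E →ₗ[ℝ] E →ₗ[ℝ] ℝ) (W : Submodule ℝ E)
    (hdef : ∀ w ∈ W, w ≠ 0 → B w w ≠ 0) (ψ : E →ₗ[ℝ] ℝ) :
    ∃ e ∈ W, ∀ v ∈ W, B e v = ψ v := by
  set T : W →ₗ[ℝ] (W →ₗ[ℝ] ℝ) := B.domRestrict₁₂ W W with hT
  have hinj : Function.Injective T := by
    rw [injective_iff_map_eq_zero]
    intro w hw
    by_contra hw0
    have h1 : (w : E) ≠ 0 := by simpa using hw0
    have h2 : B (w : E) (w : E) = 0 := by
      have := LinearMap.congr_fun hw w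
      simpa [hT, LinearMap.domRestrict₁₂_apply] using this
    exact hdef w w.2 h1 h2
  have hsurj : Function.Surjective T :=
    (LinearMap.injective_iff_surjective_of_finrank_eq_finrank
      (Subspace.dual_finrank_eq (V := W)).symm).mp hinj
  obtain ⟨w, hw⟩ := hsurj (ψ.domRestrict W)
  refine ⟨w, w.2, fun v hv => ?_⟩
  have := LinearMap.congr_fun hw ⟨v, hv⟩
  simpa [hT, LinearMap.domRestrict₁₂_apply] using this

/-- If `dim V₊ ≠ 1` and `dim V₋ ≠ 1`, then for every linear functional
`δ` on a quadratic Lie algebra `𝔡` there exists a connection which preserves the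
splitting, is torsion-free and has prescribed divergence `δ`. -/
theorem exists_leviCivita_with_prescribed_divergence
    {𝔡 : Type*} [LieRing 𝔡] [LieAlgebra ℝ 𝔡] [FiniteDimensional ℝ 𝔡]
    (B : 𝔡 →ₗ[ℝ] 𝔡 →ₗ[ℝ] ℝ)
    (hsymm : ∀ x y : 𝔡, B x y = B y x)
    (hnondeg : ∀ x : 𝔡, (∀ y : 𝔡, B x y = 0) → x = 0)
    (hinv : ∀ x y z : 𝔡, B ⁅x, y⁆ z = B x ⁅y, z⁆)
    (Vp : Submodule ℝ 𝔡) (hVp : IsGenMetric B Vp)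
    (hp : Module.finrank ℝ Vp ≠ 1)
    (hm : Module.finrank ℝ (LinearMap.BilinForm.orthogonal B Vp) ≠ 1)
    (δ : 𝔡 →ₗ[ℝ] ℝ) :
    ∃ D : 𝔡 →ₗ[ℝ] 𝔡 →ₗ[ℝ] 𝔡, IsConnection B D ∧
      (∀ x : 𝔡, ∀ y ∈ Vp, D x y ∈ Vp) ∧
      (∀ x y z : 𝔡, B (D x y - D y x - ⁅x, y⁆) z + B (D z x) y = 0) ∧
      (∀ y : 𝔡, LinearMap.trace ℝ 𝔡 (D.flip y) = δ y) := by
  classical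
  set Vm : Submodule ℝ 𝔡 := LinearMap.BilinForm.orthogonal B Vp with hVm
  -- basic algebraic identities
  have hrefl : B.IsRefl := fun x y h => by rw [hsymm]; exact h
  have cyc : ∀ u v w : 𝔡, B ⁅u, v⁆ w = B ⁅v, w⁆ u := fun u v w =>
    (hinv u v w).trans (hsymm u ⁅v, w⁆)
  have sk0 : ∀ u v w : 𝔡, B ⁅u, v⁆ w + B ⁅v, u⁆ w = 0 := by
    intro u v w
    have h : ⁅u, v⁆ + ⁅v, u⁆ = (0 : 𝔡) := by
      rw [← lie_skew u v]; abel
    have := congrArg (fun t => B t w) h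
    simpa [map_add, LinearMap.add_apply] using this
  have skr0 : ∀ u v w : 𝔡, B ⁅u, v⁆ w + B ⁅u, w⁆ v = 0 := by
    intro u v w
    rw [hinv u v w, hinv u w v]
    have h : ⁅v, w⁆ + ⁅w, v⁆ = (0 : 𝔡) := by rw [← lie_skew v w]; abel
    have := congrArg (fun t => B u t) h
    simpa [map_add] using this
  -- orthogonality
  have horth : ∀ u ∈ Vp, ∀ v ∈ Vm, B u v = 0 := by
    intro u hu v hv
    exact (LinearMap.BilinForm.mem_orthogonal_iff.mp hv) u hu
  -- the restriction of B to Vp is nondegenerate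
  have hrestr : (LinearMap.BilinForm.restrict B Vp).Nondegenerate := by
    apply (LinearMap.IsRefl.nondegenerate_iff_separatingLeft (hrefl.domRestrict Vp)).mpr
    intro x hx
    by_contra hx0
    have h1 : (x : 𝔡) ≠ 0 := by simpa using hx0
    have h2 : 0 < B (x : 𝔡) (x : 𝔡) := hVp.1 x x.2 h1
    have h3 := hx x
    simp only [LinearMap.BilinForm.restrict_apply, LinearMap.domRestrict_apply,
      LinearMap.domRestrict₁₂_apply] at h3
    exact absurd h3 (ne_of_gt h2)
  have hc : IsCompl Vp Vm :=
    LinearMap.BilinForm.isCompl_orthogonal_of_restrict_nondegenerate hrefl hrestr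
  -- projections
  set P : 𝔡 →ₗ[ℝ] 𝔡 := Vp.subtype ∘ₗ Vp.projectionOnto Vm hc with hPdef
  set Q : 𝔡 →ₗ[ℝ] 𝔡 := Vm.subtype ∘ₗ Vm.projectionOnto Vp hc.symm with hQdef
  have hPQ : ∀ x : 𝔡, P x + Q x = x := fun x =>
    Submodule.projection_add_projection_eq_self hc x
  have hPmem : ∀ x : 𝔡, P x ∈ Vp := fun x => (Vp.projectionOnto Vm hc x).2
  have hQmem : ∀ x : 𝔡, Q x ∈ Vm := fun x => (Vm.projectionOnto Vp hc.symm x).2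
  have hPleft : ∀ x ∈ Vp, P x = x := by
    intro x hx
    have h := Submodule.linearProjOfIsCompl_apply_left hc ⟨x, hx⟩
    simp only [hPdef, LinearMap.comp_apply, Submodule.subtype_apply]
    rw [h]
  have hQleft : ∀ x ∈ Vm, Q x = x := by
    intro x hx
    have h := Submodule.linearProjOfIsCompl_apply_left hc.symm ⟨x, hx⟩
    simp only [hQdef, LinearMap.comp_apply, Submodule.subtype_apply]
    rw [h]
  have hQ0 : ∀ x ∈ Vp, Q x = 0 := by
    intro x hx
    have h := Submodule.projectionOnto_apply_of_mem_right hc.symm hx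
    simp only [hQdef, LinearMap.comp_apply, Submodule.subtype_apply, h,
      Submodule.coe_zero]
  -- self-adjointness of the projections
  have hBP : ∀ u v : 𝔡, B (P u) v = B u (P v) := by
    intro u v
    have h1 : B (P u) v = B (P u) (P v) + B (P u) (Q v) := by
      conv_lhs => rw [← hPQ v]
      rw [map_add]
    have h2 : B u (P v) = B (P u) (P v) + B (Q u) (P v) := by
      conv_lhs => rw [← hPQ u]
      rw [map_add, LinearMap.add_apply]
    rw [h1, h2, horth (P u) (hPmem u) (Q v) (hQmem v),
      hsymm (Q u) (P v), horth (P v) (hPmem v) (Q u) (hQmem u)]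
  have hBQ : ∀ u v : 𝔡, B (Q u) v = B u (Q v) := by
    intro u v
    have h1 : B (Q u) v = B (Q u) (P v) + B (Q u) (Q v) := by
      conv_lhs => rw [← hPQ v]
      rw [map_add]
    have h2 : B u (Q v) = B (P u) (Q v) + B (Q u) (Q v) := by
      conv_lhs => rw [← hPQ u]
      rw [map_add, LinearMap.add_apply]
    rw [h1, h2, hsymm (Q u) (P v), horth (P v) (hPmem v) (Q u) (hQmem u),
      horth (P u) (hPmem u) (Q v) (hQmem v)]
  have hPsym : ∀ u v : 𝔡, B (P u) v = B (P v) u := fun u v =>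
    (hBP u v).trans (hsymm u (P v))
  have hQsym : ∀ u v : 𝔡, B (Q u) v = B (Q v) u := fun u v =>
    (hBQ u v).trans (hsymm u (Q v))
  -- B is nonpositive on Vm
  have hle : ∀ v ∈ Vm, B v v ≤ 0 := by
    intro v hv
    by_contra hcon
    push_neg at hcon
    have hW : IsPosDefOn B (Vp ⊔ (ℝ ∙ v)) := by
      intro w hw hw0
      obtain ⟨u, hu, s, hs, rfl⟩ := Submodule.mem_sup.mp hw
      obtain ⟨t, rfl⟩ := Submodule.mem_span_singleton.mp hs
      have hBuv : B u v = 0 := horth u hu v hv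
      have hBvu : B v u = 0 := by rw [hsymm]; exact hBuv
      have hexp : B (u + t • v) (u + t • v) = B u u + t * t * B v v := by
        simp only [map_add, map_smul, LinearMap.add_apply, LinearMap.smul_apply,
          smul_eq_mul, hBuv, hBvu]
        ring
      rcases eq_or_ne u 0 with rfl | hu0
      · have ht : t ≠ 0 := by
          rintro rfl
          simp at hw0
        rw [hexp]
        have h1 : 0 < t * t := mul_self_pos.mpr ht
        have h2 : B (0 : 𝔡) (0 : 𝔡) = 0 := by simp
        nlinarith
      · have h1 := hVp.1 u hu hu0
        rw [hexp]
        nlinarith [mul_self_nonneg t]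
    have heq := hVp.2 _ le_sup_left hW
    have hvVp : v ∈ Vp := by
      rw [← heq]
      exact Submodule.mem_sup_right (Submodule.mem_span_singleton_self v)
    have : B v v = 0 := horth v hvVp v hv
    linarith
  -- B is definite on Vm
  have hnegdef : ∀ v ∈ Vm, v ≠ 0 → B v v ≠ 0 := by
    intro v hv hv0 hBvv
    apply hv0
    apply hnondeg
    intro y
    have hy1 : B v y = B v (P y) + B v (Q y) := by
      conv_lhs => rw [← hPQ y]
      rw [map_add]
    have h2 : B v (P y) = 0 := by
      rw [hsymm]; exact horth (P y) (hPmem y) v hv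
    have h3 : B v (Q y) = 0 := by
      by_contra hb0
      set w := Q y with hw
      set b := B v w with hb
      have key : ∀ t : ℝ, B (w + t • v) (w + t • v) ≤ 0 := fun t =>
        hle _ (Submodule.add_mem _ (hQmem y) (Submodule.smul_mem _ t hv))
      have hwv : B w v = b := by rw [hb, hsymm]
      have hexp : ∀ t : ℝ, B (w + t • v) (w + t • v) = B w w + 2 * (t * b) := by
        intro t
        simp only [map_add, map_smul, LinearMap.add_apply, LinearMap.smul_apply,
          smul_eq_mul, hwv, hBvv, ← hb]
        ring
      have hkey := key ((1 - B w w) / (2 * b))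
      rw [hexp] at hkey
      have h2b : (2 : ℝ) * b ≠ 0 := by
        intro h
        exact hb0 (by linarith)
      have hval : 2 * ((1 - B w w) / (2 * b) * b) = 1 - B w w := by
        field_simp
      linarith
    rw [hy1, h2, h3, add_zero]
  have hposdef' : ∀ u ∈ Vp, u ≠ 0 → B u u ≠ 0 := fun u hu hu0 =>
    ne_of_gt (hVp.1 u hu hu0)
  -- the basic torsion-free connection
  set D0 : 𝔡 →ₗ[ℝ] 𝔡 →ₗ[ℝ] 𝔡 := LinearMap.mk₂ ℝ
    (fun x y => P ⁅Q x, P y⁆ + Q ⁅P x, Q y⁆ +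
      (3⁻¹ : ℝ) • P ⁅P x, P y⁆ + (3⁻¹ : ℝ) • Q ⁅Q x, Q y⁆)
    (by
      intro x x' y
      simp only [map_add, add_lie, smul_add]
      abel)
    (by
      intro c x y
      simp only [map_smul, smul_lie, smul_add]
      rw [smul_comm (3⁻¹ : ℝ) c, smul_comm (3⁻¹ : ℝ) c])
    (by
      intro x y y'
      simp only [map_add, lie_add, smul_add]
      abel)
    (by
      intro c x y
      simp only [map_smul, lie_smul, smul_add]
      rw [smul_comm (3⁻¹ : ℝ) c, smul_comm (3⁻¹ : ℝ) c])
    with hD0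
  -- divergence of D0
  set Div0 : 𝔡 →ₗ[ℝ] ℝ := (LinearMap.trace ℝ 𝔡) ∘ₗ D0.flip with hDiv0
  set np : ℝ := (Module.finrank ℝ Vp : ℝ) with hnp
  set nm : ℝ := (Module.finrank ℝ Vm : ℝ) with hnm
  have h1p : (1 : ℝ) - np ≠ 0 := by
    intro h
    apply hp
    have h' : np = 1 := by linarith
    rw [hnp] at h'
    exact_mod_cast h'
  have h1m : (1 : ℝ) - nm ≠ 0 := by
    intro h
    apply hm
    have h' : nm = 1 := by linarith
    rw [hnm] at h'
    exact_mod_cast h'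
  -- the representing vectors
  obtain ⟨ep, hep, hepB⟩ := exists_rep_aux B Vp hposdef'
    (((1 : ℝ) - np)⁻¹ • (δ - Div0))
  obtain ⟨em, hem, hemB⟩ := exists_rep_aux B Vm hnegdef
    (((1 : ℝ) - nm)⁻¹ • (δ - Div0))
  -- the correction term
  set A : 𝔡 →ₗ[ℝ] 𝔡 →ₗ[ℝ] 𝔡 := LinearMap.mk₂ ℝ
    (fun x y => B (P x) y • ep - B ep y • P x + B (Q x) y • em - B em y • Q x)
    (by
      intro x x' y
      simp only [map_add, LinearMap.add_apply, add_smul, smul_add]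
      abel)
    (by
      intro c x y
      simp only [map_smul, LinearMap.smul_apply, smul_eq_mul, mul_smul,
        smul_sub, smul_add]
      rw [smul_comm (B ep y) c, smul_comm (B em y) c])
    (by
      intro x y y'
      simp only [map_add, add_smul, smul_add]
      abel)
    (by
      intro c x y
      simp only [map_smul, smul_eq_mul, mul_smul, smul_sub, smul_add])
    with hA
  have htrP : LinearMap.trace ℝ 𝔡 P = np := by
    rw [hPdef, LinearMap.trace_comp_comm', Submodule.projectionOnto_comp_subtype,
      LinearMap.trace_id, hnp]
  have htrQ : LinearMap.trace ℝ 𝔡 Q = nm := by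
    rw [hQdef, LinearMap.trace_comp_comm', Submodule.projectionOnto_comp_subtype,
      LinearMap.trace_id, hnm]
  refine ⟨D0 + A, ?_, ?_, ?_, ?_⟩
  · -- connection property
    intro x y z
    have hF : B (D0 x y) z + B y (D0 x z) = 0 := by
      simp only [hD0, LinearMap.mk₂_apply, map_add, map_smul, LinearMap.add_apply,
        LinearMap.smul_apply, smul_eq_mul]
      linarith [hBP ⁅Q x, P y⁆ z, hBQ ⁅P x, Q y⁆ z, hBP ⁅P x, P y⁆ z,
        hBQ ⁅Q x, Q y⁆ z, hsymm y (P ⁅Q x, P z⁆), hsymm y (Q ⁅P x, Q z⁆),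
        hsymm y (P ⁅P x, P z⁆), hsymm y (Q ⁅Q x, Q z⁆),
        hBP ⁅Q x, P z⁆ y, hBQ ⁅P x, Q z⁆ y, hBP ⁅P x, P z⁆ y, hBQ ⁅Q x, Q z⁆ y,
        skr0 (Q x) (P y) (P z), skr0 (P x) (Q y) (Q z),
        skr0 (P x) (P y) (P z), skr0 (Q x) (Q y) (Q z)]
    have hG : B (A x y) z + B y (A x z) = 0 := by
      simp only [hA, LinearMap.mk₂_apply, map_add, map_sub, map_smul,
        LinearMap.add_apply, LinearMap.sub_apply, LinearMap.smul_apply, smul_eq_mul]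
      linear_combination (B (P x) z) * hsymm y ep - (B ep z) * hsymm y (P x) +
        (B (Q x) z) * hsymm y em - (B em z) * hsymm y (Q x)
    simp only [LinearMap.add_apply, map_add]
    linarith
  · -- preserves Vp
    intro x y hy
    have h1 : Q y = 0 := hQ0 y hy
    have h2 : B (Q x) y = 0 := by
      rw [hBQ, h1, map_zero]
    have h3 : B em y = 0 := by
      rw [hsymm]; exact horth y hy em hem
    have hval : (D0 + A) x y = P ⁅Q x, P y⁆ + (3⁻¹ : ℝ) • P ⁅P x, P y⁆ +
        (B (P x) y • ep - B ep y • P x) := by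
      simp only [LinearMap.add_apply, hD0, hA, LinearMap.mk₂_apply, h1, h2, h3,
        lie_zero, map_zero, smul_zero, add_zero, zero_smul, sub_zero]
    rw [hval]
    exact Submodule.add_mem _
      (Submodule.add_mem _ (hPmem _) (Submodule.smul_mem _ _ (hPmem _)))
      (Submodule.sub_mem _ (Submodule.smul_mem _ _ hep)
        (Submodule.smul_mem _ _ (hPmem x)))
  · -- torsion-free
    intro x y z
    have hbr : B ⁅x, y⁆ z = B ⁅P x, P y⁆ (P z) + B ⁅P x, P y⁆ (Q z) +
        B ⁅P x, Q y⁆ (P z) + B ⁅P x, Q y⁆ (Q z) + B ⁅Q x, P y⁆ (P z) +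
        B ⁅Q x, P y⁆ (Q z) + B ⁅Q x, Q y⁆ (P z) + B ⁅Q x, Q y⁆ (Q z) := by
      conv_lhs => rw [← hPQ x, ← hPQ y, ← hPQ z]
      simp only [add_lie, lie_add, map_add, LinearMap.add_apply]
      ring
    have hT0 : B (D0 x y) z - B (D0 y x) z - B ⁅x, y⁆ z + B (D0 z x) y = 0 := by
      simp only [hD0, LinearMap.mk₂_apply, map_add, map_smul, LinearMap.add_apply,
        LinearMap.smul_apply, smul_eq_mul]
      linarith [hbr, hBP ⁅Q x, P y⁆ z, hBQ ⁅P x, Q y⁆ z, hBP ⁅P x, P y⁆ z,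
        hBQ ⁅Q x, Q y⁆ z,
        hBP ⁅Q y, P x⁆ z, hBQ ⁅P y, Q x⁆ z, hBP ⁅P y, P x⁆ z, hBQ ⁅Q y, Q x⁆ z,
        hBP ⁅Q z, P x⁆ y, hBQ ⁅P z, Q x⁆ y, hBP ⁅P z, P x⁆ y, hBQ ⁅Q z, Q x⁆ y,
        sk0 (P y) (P x) (P z), cyc (P z) (P x) (P y),
        sk0 (Q y) (Q x) (Q z), cyc (Q z) (Q x) (Q y),
        cyc (Q z) (P x) (P y), cyc (P z) (Q x) (Q y),
        sk0 (Q y) (P x) (P z), sk0 (P y) (Q x) (Q z)]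
    have hTA : B (A x y) z - B (A y x) z + B (A z x) y = 0 := by
      simp only [hA, LinearMap.mk₂_apply, map_add, map_sub, map_smul,
        LinearMap.add_apply, LinearMap.sub_apply, LinearMap.smul_apply, smul_eq_mul]
      linear_combination (B ep z) * hPsym x y + (B ep x) * hPsym y z +
        (B ep y) * hPsym z x + (B em z) * hQsym x y + (B em x) * hQsym y z +
        (B em y) * hQsym z x
    simp only [LinearMap.add_apply, map_sub, map_add, LinearMap.sub_apply]
    linarith [hT0, hTA]
  · -- prescribed divergence
    intro y
    have hfl : (D0 + A).flip y = D0.flip y + A.flip y := by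
      ext x
      simp [LinearMap.flip_apply]
    have hAfl : A.flip y = (((B.flip y) ∘ₗ P).smulRight ep - B ep y • P) +
        (((B.flip y) ∘ₗ Q).smulRight em - B em y • Q) := by
      ext x
      simp only [LinearMap.flip_apply, hA, LinearMap.mk₂_apply, LinearMap.add_apply,
        LinearMap.sub_apply, LinearMap.smulRight_apply, LinearMap.comp_apply,
        LinearMap.smul_apply]
      abel
    rw [hfl, map_add, hAfl, map_add, map_sub, map_sub, map_smul, map_smul,
      trace_smulRight_aux, trace_smulRight_aux, htrP, htrQ]
    simp only [LinearMap.comp_apply, LinearMap.flip_apply, smul_eq_mul]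
    rw [hPleft ep hep, hQleft em hem]
    have hD0tr : LinearMap.trace ℝ 𝔡 (D0.flip y) = Div0 y := by
      simp [hDiv0]
    have hepy : B ep y = ((1 : ℝ) - np)⁻¹ * (δ (P y) - Div0 (P y)) := by
      have h0 : B ep y = B ep (P y) := by
        conv_lhs => rw [← hPQ y]
        rw [map_add, horth ep hep (Q y) (hQmem y), add_zero]
      rw [h0, hepB (P y) (hPmem y)]
      simp [LinearMap.smul_apply, LinearMap.sub_apply, smul_eq_mul]
    have hemy : B em y = ((1 : ℝ) - nm)⁻¹ * (δ (Q y) - Div0 (Q y)) := by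
      have h0 : B em y = B em (Q y) := by
        conv_lhs => rw [← hPQ y]
        rw [map_add]
        have hz : B em (P y) = 0 := by
          rw [hsymm]; exact horth (P y) (hPmem y) em hem
        rw [hz, zero_add]
      rw [h0, hemB (Q y) (hQmem y)]
      simp [LinearMap.smul_apply, LinearMap.sub_apply, smul_eq_mul]
    have e1 : B ep y - np * B ep y = δ (P y) - Div0 (P y) := by
      rw [hepy]
      field_simp
    have e2 : B em y - nm * B em y = δ (Q y) - Div0 (Q y) := by
      rw [hemy]
      field_simp
    have hds : δ (P y) + δ (Q y) = δ y := by rw [← map_add, hPQ]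
    have hDs : Div0 (P y) + Div0 (Q y) = Div0 y := by rw [← map_add, hPQ]
    rw [hD0tr]
    linarith [e1, e2, hds, hDs]
end
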